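/- arXiv:2512.17448 — 8 statements merged into one kernel-verified Lean document; each statement's English description precedes it below -/
import Mathlib

section
/- Fix γ > 0 and 1 ≤ p ≤ ∞. The map ι : Λ → E defined by ι(a)(x) := Σ_{n=0}^∞ (a_n/n!) x^n for x ∈ [0,γ] is a bijection, is a homeomorphism from (Λ, d_Λ) onto (E, ρ_p), and satisfies ι ∘ σ = (d/dx) ∘ ι. Consequently the shift dynamical system (Λ, σ) and the system (E, d/dx) are topologically conjugate. -/
open MeasureTheory Set Filter
open scoped ENNReal Topology

/-- The `L^p` distance of two functions over the interval `[a, b]`. -/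
noncomputable def rho (a b : ℝ) (p : ℝ≥0∞) (f g : ℝ → ℝ) : ℝ :=
  (eLpNorm (fun x => f x - g x) p (volume.restrict (Icc a b))).toReal

/-- A sequence taking values in `{0, 1}`. -/
def IsBinary (a : ℕ → ℝ) : Prop := ∀ n, a n = 0 ∨ a n = 1

/-- The function `x ↦ Σ aₙ/n! xⁿ` attached to a coefficient sequence. -/
noncomputable def fseq (a : ℕ → ℝ) : ℝ → ℝ :=
  fun x => ∑' n : ℕ, a n / (Nat.factorial n : ℝ) * x ^ n

/-- The set `E` of smooth functions of the form `Σ aₙ/n! xⁿ` with binary coefficients. -/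
def Esp : Set (ℝ → ℝ) :=
  {f | ContDiff ℝ (⊤ : ℕ∞) f ∧ ∃ a : ℕ → ℝ, IsBinary a ∧
    ∀ x : ℝ, HasSum (fun n : ℕ => a n / (Nat.factorial n : ℝ) * x ^ n) (f x)}

/-- The shift space `Λ = {0,1}^ℕ`. -/
abbrev Lam : Type := {a : ℕ → ℝ // IsBinary a}

/-- The metric `d_Λ(x, y) = Σ |xᵢ - yᵢ| / 2ⁱ` on the shift space. -/
noncomputable def dLam (x y : Lam) : ℝ := ∑' i : ℕ, |x.1 i - y.1 i| / 2 ^ i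

/-- The shift map `σ`. -/
def shiftL (x : Lam) : Lam := ⟨fun n => x.1 (n + 1), fun n => x.2 (n + 1)⟩

/-- The map `ι : Λ → C^∞`, `ι(a)(x) = Σ aₙ/n! xⁿ`. -/
noncomputable def iotaL (x : Lam) : ℝ → ℝ := fseq x.1

lemma binary_abs_le {a : ℕ → ℝ} (ha : IsBinary a) (n : ℕ) : |a n| ≤ 1 := by
  rcases ha n with h | h <;> simp [h]

lemma term_norm_le {a : ℕ → ℝ} (ha : ∀ n, |a n| ≤ 1) (x : ℝ) (n : ℕ) :
    ‖a n / (Nat.factorial n : ℝ) * x ^ n‖ ≤ |x| ^ n / (Nat.factorial n : ℝ) := by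
  have h1 : (0:ℝ) < (Nat.factorial n : ℝ) := by positivity
  rw [Real.norm_eq_abs, abs_mul, abs_div, abs_pow, abs_of_pos h1]
  rw [div_mul_eq_mul_div]
  calc |a n| * |x| ^ n / (Nat.factorial n : ℝ) ≤ 1 * |x| ^ n / (Nat.factorial n : ℝ) := by
        gcongr; exact ha n
    _ = |x| ^ n / (Nat.factorial n : ℝ) := by rw [one_mul]

lemma summable_term {a : ℕ → ℝ} (ha : ∀ n, |a n| ≤ 1) (x : ℝ) :
    Summable (fun n => a n / (Nat.factorial n : ℝ) * x ^ n) :=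
  Summable.of_norm_bounded (Real.summable_pow_div_factorial |x|) (term_norm_le ha x)

lemma hasSum_fseq {a : ℕ → ℝ} (ha : ∀ n, |a n| ≤ 1) (x : ℝ) :
    HasSum (fun n => a n / (Nat.factorial n : ℝ) * x ^ n) (fseq a x) :=
  (summable_term ha x).hasSum

lemma hasDerivAt_fseq {a : ℕ → ℝ} (ha : ∀ n, |a n| ≤ 1) (x : ℝ) :
    HasDerivAt (fseq a) (fseq (fun n => a (n + 1)) x) x := by
  set R : ℝ := |x| + 1 with hR
  have hR1 : (1:ℝ) ≤ R := by have := abs_nonneg x; linarith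
  have hxR : |x| < R := by simp [hR]
  -- the bound on derivatives
  set u : ℕ → ℝ := fun n => (n : ℝ) * R ^ (n - 1) / (Nat.factorial n : ℝ) with hu
  have hu_succ : ∀ n : ℕ, u (n + 1) = R ^ n / (Nat.factorial n : ℝ) := by
    intro n
    have : ((n:ℝ) + 1) ≠ 0 := by positivity
    simp only [hu, Nat.add_sub_cancel, Nat.factorial_succ, Nat.cast_mul, Nat.cast_add,
      Nat.cast_one]
    field_simp
  have hu_sum : Summable u := by
    rw [← summable_nat_add_iff 1]
    exact (Real.summable_pow_div_factorial R).congr fun n => (hu_succ n).symm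
  have hg : ∀ (n : ℕ) (y : ℝ), HasDerivAt (fun z => a n / (Nat.factorial n : ℝ) * z ^ n)
      (a n / (Nat.factorial n : ℝ) * ((n : ℝ) * y ^ (n - 1))) y :=
    fun n y => (hasDerivAt_pow n y).const_mul _
  have hg2 : ∀ (n : ℕ), ∀ y ∈ Metric.ball (0:ℝ) R, HasDerivAt (fun z => a n / (Nat.factorial n : ℝ) * z ^ n)
      (a n / (Nat.factorial n : ℝ) * ((n : ℝ) * y ^ (n - 1))) y := fun n y _ => hg n y
  have hg' : ∀ (n : ℕ) (y : ℝ), y ∈ Metric.ball (0:ℝ) R →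
      ‖a n / (Nat.factorial n : ℝ) * ((n : ℝ) * y ^ (n - 1))‖ ≤ u n := by
    intro n y hy
    simp only [Metric.mem_ball, Real.dist_eq, sub_zero] at hy
    have hyR : |y| ≤ R := le_of_lt hy
    simp only [Real.norm_eq_abs, abs_mul, abs_div, abs_pow, Nat.abs_cast]
    have h1 : (0:ℝ) < (Nat.factorial n : ℝ) := by positivity
    have h2 : |y| ^ (n-1) ≤ R ^ (n-1) :=
      pow_le_pow_left₀ (abs_nonneg y) hyR _
    calc |a n| / (Nat.factorial n : ℝ) * ((n:ℝ) * |y| ^ (n-1))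
        ≤ 1 / (Nat.factorial n : ℝ) * ((n:ℝ) * R ^ (n-1)) := by
          gcongr <;> first | exact ha n | exact h2 | positivity
      _ = u n := by rw [hu]; ring
  -- apply the term-by-term differentiation theorem
  have key := hasDerivAt_tsum_of_isPreconnected hu_sum Metric.isOpen_ball
    (convex_ball (0:ℝ) R).isPreconnected hg2 hg'
    (by simpa [Metric.mem_ball] using lt_of_le_of_lt (le_refl (0:ℝ)) (by linarith : (0:ℝ) < R))
    (summable_term ha 0) (by simpa [Metric.mem_ball, Real.dist_eq] using hxR)
  have hsum_eq : (∑' n : ℕ, a n / (Nat.factorial n : ℝ) * ((n : ℝ) * x ^ (n - 1)))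
      = fseq (fun n => a (n + 1)) x := by
    have hs : Summable (fun n => a n / (Nat.factorial n : ℝ) * ((n : ℝ) * x ^ (n - 1))) := by
      apply Summable.of_norm_bounded hu_sum
      intro n; exact hg' n x (by simpa [Metric.mem_ball, Real.dist_eq] using hxR)
    rw [hs.tsum_eq_zero_add]
    simp only [Nat.cast_zero, zero_mul, mul_zero, zero_add]
    rw [fseq]
    apply tsum_congr
    intro n
    have : ((n:ℝ) + 1) ≠ 0 := by positivity
    simp only [Nat.add_sub_cancel, Nat.factorial_succ, Nat.cast_mul, Nat.cast_add, Nat.cast_one]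
    field_simp
  rw [← hsum_eq]
  exact key

lemma deriv_fseq {a : ℕ → ℝ} (ha : ∀ n, |a n| ≤ 1) :
    deriv (fseq a) = fseq (fun n => a (n + 1)) :=
  funext fun x => (hasDerivAt_fseq ha x).deriv

lemma iteratedDeriv_fseq {a : ℕ → ℝ} (ha : ∀ n, |a n| ≤ 1) (k : ℕ) :
    iteratedDeriv k (fseq a) = fseq (fun n => a (n + k)) := by
  induction k generalizing a with
  | zero => simp [iteratedDeriv_zero]
  | succ k ih =>
    rw [iteratedDeriv_succ', deriv_fseq ha, ih (fun n => ha (n+1))]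
    simp only [add_assoc, add_comm 1 k]

lemma contDiff_fseq {a : ℕ → ℝ} (ha : ∀ n, |a n| ≤ 1) : ContDiff ℝ (⊤ : ℕ∞) (fseq a) := by
  apply contDiff_of_differentiable_iteratedDeriv
  intro m _
  rw [iteratedDeriv_fseq ha]
  exact fun x => (hasDerivAt_fseq (fun n => ha (n + m)) x).differentiableAt

lemma fseq_zero (a : ℕ → ℝ) : fseq a 0 = a 0 := by
  rw [fseq]
  rw [tsum_eq_single 0 (fun n hn => by simp [zero_pow hn])]
  simp

noncomputable def tailT (γ : ℝ) (N : ℕ) : ℝ :=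
  ∑' k : ℕ, γ ^ (k + (N + 1)) / (Nat.factorial (k + (N + 1)) : ℝ)

lemma summable_tail (γ : ℝ) (N : ℕ) :
    Summable (fun k : ℕ => γ ^ (k + (N + 1)) / (Nat.factorial (k + (N + 1)) : ℝ)) :=
  (summable_nat_add_iff (f := fun n => γ ^ n / (Nat.factorial n : ℝ)) (N + 1)).mpr
    (Real.summable_pow_div_factorial γ)

lemma tailT_tendsto (γ : ℝ) : Tendsto (fun N => tailT γ N) atTop (𝓝 0) := by
  have h := ((tendsto_sum_nat_add (f := fun n => γ ^ n / (Nat.factorial n : ℝ))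
    (G := ℝ))).comp (tendsto_add_atTop_nat 1)
  exact h

lemma binary_sub_abs_le {x y : ℕ → ℝ} (hx : IsBinary x) (hy : IsBinary y) (n : ℕ) :
    |x n - y n| ≤ 1 := by
  rcases hx n with h | h <;> rcases hy n with h' | h' <;> simp [h, h']

lemma diff_eq_tsum {x y : ℕ → ℝ} (hx : IsBinary x) (hy : IsBinary y) (t : ℝ) :
    fseq x t - fseq y t = ∑' n : ℕ, (x n - y n) / (Nat.factorial n : ℝ) * t ^ n := by
  rw [fseq, fseq, ← (summable_term (binary_abs_le hx) t).tsum_sub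
    (summable_term (binary_abs_le hy) t)]
  apply tsum_congr
  intro n
  ring

lemma summable_diff {x y : ℕ → ℝ} (hx : IsBinary x) (hy : IsBinary y) (t : ℝ) :
    Summable (fun n : ℕ => (x n - y n) / (Nat.factorial n : ℝ) * t ^ n) :=
  summable_term (binary_sub_abs_le hx hy) t

lemma diff_upper {x y : ℕ → ℝ} (hx : IsBinary x) (hy : IsBinary y) {N : ℕ}
    (h : ∀ i ≤ N, x i = y i) {γ t : ℝ} (ht0 : 0 ≤ t) (ht : t ≤ γ) :
    |fseq x t - fseq y t| ≤ tailT γ N := by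
  set d : ℕ → ℝ := fun n => (x n - y n) / (Nat.factorial n : ℝ) * t ^ n with hd
  have hsd : Summable d := summable_diff hx hy t
  have hterm : ∀ m : ℕ, |d m| ≤ γ ^ m / (Nat.factorial m : ℝ) := by
    intro m
    have h1 := term_norm_le (a := fun n => x n - y n) (binary_sub_abs_le hx hy) t m
    rw [Real.norm_eq_abs] at h1
    refine h1.trans ?_
    have : |t| ≤ γ := by rwa [abs_of_nonneg ht0]
    gcongr <;> first | exact abs_nonneg t | exact this | positivity
  rw [diff_eq_tsum hx hy, ← hsd.sum_add_tsum_nat_add (N + 1)]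
  have hzero : ∑ i ∈ Finset.range (N + 1), d i = 0 := by
    apply Finset.sum_eq_zero
    intro i hi
    have hi' := Finset.mem_range.mp hi
    have : x i = y i := h i (by omega)
    simp [hd, this]
  rw [hzero, zero_add]
  have hsum2 : Summable (fun k : ℕ => ‖d (k + (N + 1))‖) :=
    summable_norm_iff.mpr ((summable_nat_add_iff (N + 1)).mpr hsd)
  calc |∑' k : ℕ, d (k + (N + 1))| = ‖∑' k : ℕ, d (k + (N + 1))‖ := (Real.norm_eq_abs _).symm
    _ ≤ ∑' k : ℕ, ‖d (k + (N + 1))‖ := norm_tsum_le_tsum_norm hsum2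
    _ ≤ tailT γ N := by
        apply Summable.tsum_le_tsum _ hsum2 (summable_tail γ N)
        intro k
        rw [Real.norm_eq_abs]
        exact hterm (k + (N + 1))

lemma diff_lower {x y : ℕ → ℝ} (hx : IsBinary x) (hy : IsBinary y) {i : ℕ}
    (hbefore : ∀ j < i, x j = y j) (hne : x i ≠ y i) {t : ℝ} (ht0 : 0 < t)
    (ht : t ≤ 1 / 3) :
    t ^ i / (2 * (Nat.factorial i : ℝ)) ≤ |fseq x t - fseq y t| := by
  have ht1 : t < 1 := by linarith
  set d : ℕ → ℝ := fun n => (x n - y n) / (Nat.factorial n : ℝ) * t ^ n with hd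
  have hsd : Summable d := summable_diff hx hy t
  have hfac : (0:ℝ) < (Nat.factorial i : ℝ) := by positivity
  have habs_i : |x i - y i| = 1 := by
    rcases hx i with h | h <;> rcases hy i with h' | h' <;>
      simp [h, h'] at hne ⊢
  have hdi : |d i| = t ^ i / (Nat.factorial i : ℝ) := by
    rw [hd]
    rw [abs_mul, abs_div, habs_i, Nat.abs_cast, abs_pow, abs_of_pos ht0]
    ring
  -- the tail sum
  have hsd' : Summable (fun k : ℕ => d (k + i)) := (summable_nat_add_iff i).mpr hsd
  have hsd'' : Summable (fun k : ℕ => d (k + 1 + i)) := by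
    exact (summable_nat_add_iff (f := fun k => d (k + i)) 1).mpr hsd'
  -- geometric bound on the tail
  have hgeo : Summable (fun k : ℕ => t ^ i / (Nat.factorial i : ℝ) * t ^ (k + 1)) := by
    apply Summable.mul_left
    exact ((summable_geometric_of_lt_one ht0.le ht1).mul_left t).congr fun k => by
      rw [pow_succ]; ring
  have htail : |∑' k : ℕ, d (k + 1 + i)| ≤ t ^ i / (Nat.factorial i : ℝ) * (t / (1 - t)) := by
    have hbound : ∀ k : ℕ, ‖d (k + 1 + i)‖ ≤ t ^ i / (Nat.factorial i : ℝ) * t ^ (k + 1) := by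
      intro k
      rw [hd, Real.norm_eq_abs, abs_mul, abs_div, Nat.abs_cast, abs_pow, abs_of_pos ht0]
      have h1 : |x (k+1+i) - y (k+1+i)| ≤ 1 := binary_sub_abs_le hx hy _
      have h2 : (Nat.factorial i : ℝ) ≤ (Nat.factorial (k+1+i) : ℝ) := by
        exact_mod_cast Nat.factorial_le (by omega)
      have h3 : t ^ (k+1+i) = t ^ i * t ^ (k+1) := by rw [← pow_add]; ring_nf
      calc |x (k+1+i) - y (k+1+i)| / (Nat.factorial (k+1+i) : ℝ) * t ^ (k+1+i)
          ≤ 1 / (Nat.factorial i : ℝ) * t ^ (k+1+i) := by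
            gcongr <;> first | exact h1 | exact h2 | positivity
        _ = t ^ i / (Nat.factorial i : ℝ) * t ^ (k+1) := by rw [h3]; ring
    have hsn : Summable (fun k : ℕ => ‖d (k + 1 + i)‖) := summable_norm_iff.mpr hsd''
    calc |∑' k : ℕ, d (k + 1 + i)| = ‖∑' k : ℕ, d (k + 1 + i)‖ := (Real.norm_eq_abs _).symm
      _ ≤ ∑' k : ℕ, ‖d (k + 1 + i)‖ := norm_tsum_le_tsum_norm hsn
      _ ≤ ∑' k : ℕ, t ^ i / (Nat.factorial i : ℝ) * t ^ (k + 1) :=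
          Summable.tsum_le_tsum hbound hsn hgeo
      _ = t ^ i / (Nat.factorial i : ℝ) * (t / (1 - t)) := by
          rw [tsum_mul_left]
          congr 1
          have : ∑' k : ℕ, t ^ (k + 1) = t * ∑' k : ℕ, t ^ k := by
            rw [← tsum_mul_left]
            exact tsum_congr fun k => by rw [pow_succ]; ring
          rw [this, tsum_geometric_of_lt_one ht0.le ht1]
          field_simp
  have htail2 : |∑' k : ℕ, d (k + 1 + i)| ≤ t ^ i / (2 * (Nat.factorial i : ℝ)) := by
    refine htail.trans ?_
    have h13 : t / (1 - t) ≤ 1 / 2 := by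
      rw [div_le_div_iff₀ (by linarith) (by norm_num)]
      linarith
    calc t ^ i / (Nat.factorial i : ℝ) * (t / (1 - t))
        ≤ t ^ i / (Nat.factorial i : ℝ) * (1 / 2) := by
          gcongr <;> first | exact h13 | positivity
      _ = t ^ i / (2 * (Nat.factorial i : ℝ)) := by ring
  -- decompose the sum
  have hdecomp : fseq x t - fseq y t = d i + ∑' k : ℕ, d (k + 1 + i) := by
    rw [diff_eq_tsum hx hy, ← hsd.sum_add_tsum_nat_add i]
    have hzero : ∑ j ∈ Finset.range i, d j = 0 := by
      apply Finset.sum_eq_zero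
      intro j hj
      have := hbefore j (Finset.mem_range.mp hj)
      simp [hd, this]
    rw [hzero, zero_add, hsd'.tsum_eq_zero_add]
    simp only [zero_add]
  rw [hdecomp]
  have h1 : |d i| - |∑' k : ℕ, d (k + 1 + i)| ≤ |d i + ∑' k : ℕ, d (k + 1 + i)| := by
    have := abs_sub_abs_le_abs_sub (d i) (-(∑' k : ℕ, d (k + 1 + i)))
    simp only [abs_neg, sub_neg_eq_add] at this
    exact this
  have h2 : t ^ i / (Nat.factorial i : ℝ) - t ^ i / (2 * (Nat.factorial i : ℝ))
      = t ^ i / (2 * (Nat.factorial i : ℝ)) := by ring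
  linarith [hdi ▸ h1]

lemma fseq_abs_le {a : ℕ → ℝ} (ha : ∀ n, |a n| ≤ 1) {γ t : ℝ} (ht0 : 0 ≤ t) (ht : t ≤ γ) :
    |fseq a t| ≤ ∑' n : ℕ, γ ^ n / (Nat.factorial n : ℝ) := by
  have hs := summable_term ha t
  have hsn : Summable (fun n : ℕ => ‖a n / (Nat.factorial n : ℝ) * t ^ n‖) :=
    summable_norm_iff.mpr hs
  calc |fseq a t| = ‖∑' n : ℕ, a n / (Nat.factorial n : ℝ) * t ^ n‖ := by
        rw [fseq, Real.norm_eq_abs]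
    _ ≤ ∑' n : ℕ, ‖a n / (Nat.factorial n : ℝ) * t ^ n‖ := norm_tsum_le_tsum_norm hsn
    _ ≤ ∑' n : ℕ, γ ^ n / (Nat.factorial n : ℝ) := by
        apply Summable.tsum_le_tsum _ hsn (Real.summable_pow_div_factorial γ)
        intro n
        refine (term_norm_le ha t n).trans ?_
        have : |t| ≤ γ := by rwa [abs_of_nonneg ht0]
        gcongr <;> first | exact abs_nonneg t | exact this | positivity

lemma eLpNorm_upper_aux (γ : ℝ) (p : ℝ≥0∞) {f : ℝ → ℝ} {C : ℝ}
    (hC : ∀ t ∈ Icc (0:ℝ) γ, |f t| ≤ C) :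
    eLpNorm f p (volume.restrict (Icc 0 γ))
      ≤ (ENNReal.ofReal γ) ^ p.toReal⁻¹ * ENNReal.ofReal C := by
  have h := eLpNorm_le_of_ae_bound (μ := volume.restrict (Icc (0:ℝ) γ)) (p := p) (f := f)
    (C := C) ((ae_restrict_iff' measurableSet_Icc).mpr
      (ae_of_all _ fun t ht => by rw [Real.norm_eq_abs]; exact hC t ht))
  rwa [Measure.restrict_apply_univ, Real.volume_Icc, sub_zero] at h

lemma eLpNorm_diff_ne_top (γ : ℝ) (p : ℝ≥0∞) {x y : ℕ → ℝ}
    (hx : IsBinary x) (hy : IsBinary y) :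
    eLpNorm (fun t => fseq x t - fseq y t) p (volume.restrict (Icc 0 γ)) ≠ ⊤ := by
  set T : ℝ := ∑' n : ℕ, γ ^ n / (Nat.factorial n : ℝ) with hT
  have hb : ∀ t ∈ Icc (0:ℝ) γ, |fseq x t - fseq y t| ≤ 2 * T := by
    intro t ht
    have h1 := fseq_abs_le (binary_abs_le hx) ht.1 ht.2
    have h2 := fseq_abs_le (binary_abs_le hy) ht.1 ht.2
    calc |fseq x t - fseq y t| ≤ |fseq x t| + |fseq y t| := abs_sub _ _
      _ ≤ 2 * T := by rw [hT]; linarith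
  refine ne_top_of_le_ne_top ?_ (eLpNorm_upper_aux γ p hb)
  exact ENNReal.mul_ne_top
    (ENNReal.rpow_ne_top_of_nonneg (by positivity) ENNReal.ofReal_ne_top)
    ENNReal.ofReal_ne_top

lemma eLpNorm_lower_aux {γ : ℝ} (hγ : 0 < γ) {p : ℝ≥0∞} (hp : 1 ≤ p) (N : ℕ)
    {x y : ℕ → ℝ} (hx : IsBinary x) (hy : IsBinary y)
    (hne : ∃ i ≤ N, x i ≠ y i) :
    ENNReal.ofReal ((min γ (1/3) / 2) ^ N / (2 * (Nat.factorial N : ℝ))) *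
      (ENNReal.ofReal (min γ (1/3) / 2)) ^ (1 / p.toReal)
      ≤ eLpNorm (fun t => fseq x t - fseq y t) p (volume.restrict (Icc 0 γ)) := by
  set c : ℝ := min γ (1/3) with hc
  have hc0 : 0 < c := lt_min hγ (by norm_num)
  have hc3 : c ≤ 1/3 := min_le_right _ _
  have hcγ : c ≤ γ := min_le_left _ _
  have hc1 : c / 2 ≤ 1 := by linarith
  set m : ℝ := (c / 2) ^ N / (2 * (Nat.factorial N : ℝ)) with hm
  have hNfac : (0:ℝ) < (Nat.factorial N : ℝ) := by positivity
  have hm0 : 0 < m := by positivity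
  -- the least index where x and y differ
  have hex : ∃ i, x i ≠ y i := by obtain ⟨i, _, hi⟩ := hne; exact ⟨i, hi⟩
  set i := Nat.find hex with hi
  have hiN : i ≤ N := by
    obtain ⟨j, hjN, hj⟩ := hne
    exact le_trans (Nat.find_min' hex hj) hjN
  have hbefore : ∀ j < i, x j = y j := fun j hj => by
    by_contra h; exact (Nat.find_min hex hj) h
  have hne_i : x i ≠ y i := Nat.find_spec hex
  -- pointwise bound on [c/2, c]
  have hpt : ∀ t ∈ Icc (c/2) c, m ≤ |fseq x t - fseq y t| := by
    intro t ht
    have ht0 : 0 < t := lt_of_lt_of_le (by linarith) ht.1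
    have htc : t ≤ 1/3 := le_trans ht.2 hc3
    refine le_trans ?_ (diff_lower hx hy hbefore hne_i ht0 htc)
    have h1 : (c/2) ^ N ≤ (c/2) ^ i := pow_le_pow_of_le_one (by linarith) hc1 hiN
    have h2 : (c/2) ^ i ≤ t ^ i := pow_le_pow_left₀ (by linarith) ht.1 i
    have h3 : (Nat.factorial i : ℝ) ≤ (Nat.factorial N : ℝ) := by
      exact_mod_cast Nat.factorial_le hiN
    have hifac : (0:ℝ) < (Nat.factorial i : ℝ) := by positivity
    rw [hm]
    calc (c/2) ^ N / (2 * (Nat.factorial N : ℝ)) ≤ t ^ i / (2 * (Nat.factorial N : ℝ)) := by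
          gcongr
          linarith
      _ ≤ t ^ i / (2 * (Nat.factorial i : ℝ)) := by
          gcongr <;> first | exact h3 | positivity
  -- compare with the constant m on the small interval
  have hsub : Icc (c/2) c ⊆ Icc (0:ℝ) γ := Icc_subset_Icc (by linarith) hcγ
  have hmono : eLpNorm (fun t => fseq x t - fseq y t) p (volume.restrict (Icc (c/2) c))
      ≤ eLpNorm (fun t => fseq x t - fseq y t) p (volume.restrict (Icc 0 γ)) :=
    eLpNorm_mono_measure _ (Measure.restrict_mono hsub le_rfl)
  have hμ' : (volume.restrict (Icc (c/2) c)) Set.univ = ENNReal.ofReal (c/2) := by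
    rw [Measure.restrict_apply_univ, Real.volume_Icc]
    congr 1
    ring
  have hμ0 : volume.restrict (Icc (c/2) c) ≠ 0 := by
    intro h0
    have h1 := hμ'
    rw [h0] at h1
    simp only [Measure.coe_zero, Pi.zero_apply] at h1
    exact absurd h1.symm (ne_of_gt (ENNReal.ofReal_pos.mpr (by linarith)))
  have hconst : eLpNorm (fun _ : ℝ => m) p (volume.restrict (Icc (c/2) c))
      = ENNReal.ofReal m * (ENNReal.ofReal (c/2)) ^ (1 / p.toReal) := by
    rw [eLpNorm_const m (lt_of_lt_of_le zero_lt_one hp).ne' hμ0, hμ',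
      Real.enorm_eq_ofReal hm0.le]
  have hmle : eLpNorm (fun _ : ℝ => m) p (volume.restrict (Icc (c/2) c))
      ≤ eLpNorm (fun t => fseq x t - fseq y t) p (volume.restrict (Icc (c/2) c)) := by
    apply eLpNorm_mono_ae
    refine (ae_restrict_iff' measurableSet_Icc).mpr (ae_of_all _ fun t ht => ?_)
    rw [Real.norm_eq_abs, Real.norm_eq_abs, abs_of_pos hm0]
    exact hpt t ht
  calc ENNReal.ofReal m * (ENNReal.ofReal (c/2)) ^ (1 / p.toReal)
      = eLpNorm (fun _ : ℝ => m) p (volume.restrict (Icc (c/2) c)) := hconst.symm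
    _ ≤ eLpNorm (fun t => fseq x t - fseq y t) p (volume.restrict (Icc (c/2) c)) := hmle
    _ ≤ _ := hmono

lemma summable_dLam {x y : ℕ → ℝ} (hx : IsBinary x) (hy : IsBinary y) :
    Summable (fun i : ℕ => |x i - y i| / 2 ^ i) := by
  apply Summable.of_nonneg_of_le (fun i => by positivity)
    (fun i => ?_) (summable_geometric_of_lt_one (by norm_num : (0:ℝ) ≤ 1/2) (by norm_num))
  rw [div_pow, one_pow]
  gcongr <;> first | exact binary_sub_abs_le hx hy i | norm_num

lemma le_dLam {x y : ℕ → ℝ} (hx : IsBinary x) (hy : IsBinary y) {i : ℕ} (h : x i ≠ y i) :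
    (1/2 : ℝ) ^ i ≤ ∑' j : ℕ, |x j - y j| / 2 ^ j := by
  have habs : |x i - y i| = 1 := by
    rcases hx i with h' | h' <;> rcases hy i with h'' | h'' <;> simp [h', h''] at h ⊢
  have := (summable_dLam hx hy).le_tsum i (fun j _ => by positivity)
  calc (1/2 : ℝ) ^ i = |x i - y i| / 2 ^ i := by rw [habs, div_pow, one_pow]
    _ ≤ _ := this

lemma dLam_le {x y : ℕ → ℝ} (hx : IsBinary x) (hy : IsBinary y) {N : ℕ}
    (h : ∀ i ≤ N, x i = y i) :
    ∑' j : ℕ, |x j - y j| / 2 ^ j ≤ (1/2 : ℝ) ^ N := by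
  have hs := summable_dLam hx hy
  rw [← hs.sum_add_tsum_nat_add (N+1)]
  have hzero : ∑ i ∈ Finset.range (N + 1), |x i - y i| / 2 ^ i = 0 := by
    apply Finset.sum_eq_zero
    intro i hi
    have hi' := Finset.mem_range.mp hi
    have : x i = y i := h i (by omega)
    simp [this]
  rw [hzero, zero_add]
  have hgeo : Summable (fun k : ℕ => (1/2 : ℝ) ^ (k + (N+1))) :=
    (summable_nat_add_iff (f := fun k => (1/2:ℝ)^k) (N+1)).mpr
      (summable_geometric_of_lt_one (by norm_num) (by norm_num))
  calc ∑' k : ℕ, |x (k + (N+1)) - y (k + (N+1))| / 2 ^ (k + (N+1))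
      ≤ ∑' k : ℕ, (1/2 : ℝ) ^ (k + (N+1)) := by
        apply Summable.tsum_le_tsum _
          ((summable_nat_add_iff (f := fun i => |x i - y i| / 2 ^ i) (N+1)).mpr hs) hgeo
        intro k
        rw [div_pow, one_pow]
        gcongr <;> first | exact binary_sub_abs_le hx hy _ | norm_num
    _ = (1/2 : ℝ) ^ N := by
        have : ∀ k : ℕ, (1/2 : ℝ) ^ (k + (N+1)) = (1/2)^(N+1) * (1/2)^k := fun k => by
          rw [pow_add]; ring
        rw [tsum_congr this, tsum_mul_left, tsum_geometric_of_lt_one (by norm_num) (by norm_num)]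
        norm_num [pow_succ]
        ring

/-- For `γ > 0` and `1 ≤ p ≤ ∞`, the map `ι` is a bijection from `Λ`
onto `E`, it is a homeomorphism from `(Λ, d_Λ)` onto `(E, ρ_p)` (expressed by the ε-δ
continuity of `ι` and of its inverse), and it intertwines the shift `σ` with the
differential operator `d/dx`; hence `(Λ, σ)` and `(E, d/dx)` are topologically conjugate. -/
theorem stmt0 (γ : ℝ) (hγ : 0 < γ) (p : ℝ≥0∞) (hp : 1 ≤ p) :
    Function.Injective iotaL ∧ Set.range iotaL = Esp ∧
    (∀ x : Lam, ∀ ε > (0 : ℝ), ∃ δ > (0 : ℝ), ∀ y : Lam,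
      dLam x y < δ → rho 0 γ p (iotaL x) (iotaL y) < ε) ∧
    (∀ x : Lam, ∀ ε > (0 : ℝ), ∃ δ > (0 : ℝ), ∀ y : Lam,
      rho 0 γ p (iotaL x) (iotaL y) < δ → dLam x y < ε) ∧
    (∀ x : Lam, iotaL (shiftL x) = deriv (iotaL x)) := by
  refine ⟨?_, ?_, ?_, ?_, ?_⟩
  · -- injectivity
    intro x y h
    apply Subtype.ext; funext n
    have h1 := congrArg (fun f => iteratedDeriv n f 0) h
    simp only [iotaL] at h1
    rw [iteratedDeriv_fseq (binary_abs_le x.2), iteratedDeriv_fseq (binary_abs_le y.2),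
      fseq_zero, fseq_zero] at h1
    simpa using h1
  · -- range = Esp
    ext f
    simp only [Esp, mem_setOf_eq, Set.mem_range]
    constructor
    · rintro ⟨x, rfl⟩
      exact ⟨contDiff_fseq (binary_abs_le x.2), x.1, x.2,
        fun t => hasSum_fseq (binary_abs_le x.2) t⟩
    · rintro ⟨hc, a, hb, hsum⟩
      exact ⟨⟨a, hb⟩, funext fun t => (hsum t).tsum_eq⟩
  · -- continuity of ι
    intro x ε hε
    set M : ℝ := ((ENNReal.ofReal γ) ^ p.toReal⁻¹).toReal with hM
    have hM0 : 0 ≤ M := ENNReal.toReal_nonneg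
    have hpos : 0 < ε / (M + 1) := by positivity
    obtain ⟨N, hN⟩ := ((tailT_tendsto γ).eventually_lt_const hpos).exists
    refine ⟨(1/2) ^ N, by positivity, fun y hdy => ?_⟩
    have hagree : ∀ i ≤ N, x.1 i = y.1 i := by
      intro i hi
      by_contra hne
      have h1 := le_dLam x.2 y.2 hne
      have h2 : ((1:ℝ)/2) ^ N ≤ (1/2) ^ i :=
        pow_le_pow_of_le_one (by norm_num) (by norm_num) hi
      rw [dLam] at hdy
      linarith
    have hboundpt : ∀ t ∈ Icc (0:ℝ) γ, |fseq x.1 t - fseq y.1 t| ≤ tailT γ N :=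
      fun t ht => diff_upper x.2 y.2 hagree ht.1 ht.2
    have hub := eLpNorm_upper_aux γ p (f := fun t => iotaL x t - iotaL y t) hboundpt
    have htail0 : 0 ≤ tailT γ N := tsum_nonneg fun k => by positivity
    have hfin : (ENNReal.ofReal γ) ^ p.toReal⁻¹ ≠ ⊤ :=
      ENNReal.rpow_ne_top_of_nonneg (by positivity) ENNReal.ofReal_ne_top
    have hfin2 : (ENNReal.ofReal γ) ^ p.toReal⁻¹ * ENNReal.ofReal (tailT γ N) ≠ ⊤ :=
      ENNReal.mul_ne_top hfin ENNReal.ofReal_ne_top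
    calc rho 0 γ p (iotaL x) (iotaL y)
        ≤ ((ENNReal.ofReal γ) ^ p.toReal⁻¹ * ENNReal.ofReal (tailT γ N)).toReal :=
          ENNReal.toReal_mono hfin2 hub
      _ = M * tailT γ N := by rw [ENNReal.toReal_mul, ENNReal.toReal_ofReal htail0, hM]
      _ ≤ (M + 1) * tailT γ N := by nlinarith
      _ < (M + 1) * (ε / (M + 1)) := by
          apply mul_lt_mul_of_pos_left hN (by positivity)
      _ = ε := by field_simp
  · -- continuity of the inverse
    intro x ε hε
    obtain ⟨N, hN⟩ : ∃ N : ℕ, (1/2 : ℝ) ^ N < ε := exists_pow_lt_of_lt_one hε (by norm_num)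
    set c : ℝ := min γ (1/3) with hc
    have hc0 : 0 < c := lt_min hγ (by norm_num)
    set m : ℝ := (c/2) ^ N / (2 * (Nat.factorial N : ℝ)) with hm
    have hm0 : 0 < m := by positivity
    set A : ℝ≥0∞ := ENNReal.ofReal m * (ENNReal.ofReal (c/2)) ^ (1 / p.toReal) with hA
    have hAfin : A ≠ ⊤ := ENNReal.mul_ne_top ENNReal.ofReal_ne_top
      (ENNReal.rpow_ne_top_of_nonneg (by positivity) ENNReal.ofReal_ne_top)
    have hA0 : A ≠ 0 := by
      rw [hA]
      apply mul_ne_zero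
      · exact (ENNReal.ofReal_pos.mpr hm0).ne'
      · exact (ENNReal.rpow_pos (ENNReal.ofReal_pos.mpr (by linarith)) ENNReal.ofReal_ne_top).ne'
    refine ⟨A.toReal, ENNReal.toReal_pos hA0 hAfin, fun y hry => ?_⟩
    have hagree : ∀ i ≤ N, x.1 i = y.1 i := by
      intro i hi
      by_contra hne
      have hlow := eLpNorm_lower_aux hγ hp N x.2 y.2 ⟨i, hi, hne⟩
      have hfin := eLpNorm_diff_ne_top γ p x.2 y.2
      have h2 : A.toReal ≤ rho 0 γ p (iotaL x) (iotaL y) := ENNReal.toReal_mono hfin hlow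
      linarith
    calc dLam x y ≤ (1/2 : ℝ) ^ N := dLam_le x.2 y.2 hagree
      _ < ε := hN
  · -- intertwining
    intro x
    exact (deriv_fseq (binary_abs_le x.2)).symm
end

section
/- Fix γ > 0 and 1 ≤ p ≤ ∞. The metric space (E, ρ_p) is a Cantor set: it is nonempty, compact, metrizable, totally disconnected, and has no isolated points. -/
open MeasureTheory Set Filter
open scoped ENNReal Topology

/-- The topology on `E` induced by the metric `ρ_p`: it is generated by the open
`ρ_p`-balls of `E`. -/
noncomputable def Etop (γ : ℝ) (p : ℝ≥0∞) : TopologicalSpace ↥Esp :=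
  TopologicalSpace.generateFrom
    {U : Set ↥Esp | ∃ f : ↥Esp, ∃ ε : ℝ, 0 < ε ∧ U = {g : ↥Esp | rho 0 γ p f.1 g.1 < ε}}

namespace Stmt2Aux

/-! ### The power series -/

noncomputable def ser (c : ℕ → ℝ) : FormalMultilinearSeries ℝ ℝ ℝ :=
  FormalMultilinearSeries.ofScalars ℝ (fun n => c n / n.factorial)

theorem ser_radius (c : ℕ → ℝ) (hc : ∀ n, |c n| ≤ 1) : (ser c).radius = ⊤ := by
  apply FormalMultilinearSeries.radius_eq_top_of_summable_norm
  intro r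
  apply Summable.of_nonneg_of_le (fun n => by positivity) (fun n => ?_)
    (Real.summable_pow_div_factorial r)
  rw [ser, FormalMultilinearSeries.ofScalars_norm]
  have h1 : ‖c n / n.factorial‖ ≤ 1 / n.factorial := by
    rw [Real.norm_eq_abs, abs_div, Nat.abs_cast]
    gcongr; exact hc n
  calc ‖c n / n.factorial‖ * r ^ n ≤ (1/n.factorial) * r ^ n := by gcongr
    _ = r ^ n / n.factorial := by ring

theorem ser_hasSum (c : ℕ → ℝ) (hc : ∀ n, |c n| ≤ 1) (x : ℝ) :
    HasSum (fun n : ℕ => c n / n.factorial * x ^ n) ((ser c).sum x) := by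
  have h := ((ser c).hasFPowerSeriesOnBall (by rw [ser_radius c hc]; exact ENNReal.zero_lt_top))
  have h2 := h.hasSum (y := x) (by rw [ser_radius c hc]; simp)
  rw [zero_add] at h2
  have h3 : (fun n => (ser c) n fun _ => x) = fun n : ℕ => c n / n.factorial * x ^ n := by
    funext n
    rw [ser, FormalMultilinearSeries.ofScalars_apply_eq, smul_eq_mul]
  rwa [h3] at h2

theorem ser_analytic (c : ℕ → ℝ) (hc : ∀ n, |c n| ≤ 1) :
    AnalyticOnNhd ℝ (ser c).sum univ := by
  have h := ((ser c).hasFPowerSeriesOnBall (by rw [ser_radius c hc]; exact ENNReal.zero_lt_top))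
  intro x _
  exact h.analyticAt_of_mem (by rw [ser_radius c hc]; simp)

theorem ser_contDiff (c : ℕ → ℝ) (hc : ∀ n, |c n| ≤ 1) : ContDiff ℝ (⊤ : ℕ∞) (ser c).sum :=
  (ser_analytic c hc).contDiff.of_le le_top

/-- Any member of `Esp` is the sum of its series. -/
theorem eq_ser_sum {f : ℝ → ℝ} {c : ℕ → ℝ} (hb : IsBinary c)
    (hs : ∀ x : ℝ, HasSum (fun n : ℕ => c n / (Nat.factorial n : ℝ) * x ^ n) (f x)) :
    f = (ser c).sum := by
  have hc : ∀ n, |c n| ≤ 1 := fun n => by rcases hb n with h | h <;> simp [h]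
  funext x
  exact (hs x).unique (ser_hasSum c hc x)

theorem mem_analytic {f : ℝ → ℝ} (hf : f ∈ Esp) : AnalyticOnNhd ℝ f univ := by
  obtain ⟨-, c, hb, hs⟩ := hf
  have hc : ∀ n, |c n| ≤ 1 := fun n => by rcases hb n with h | h <;> simp [h]
  rw [eq_ser_sum hb hs]
  exact ser_analytic c hc

theorem mem_continuous {f : ℝ → ℝ} (hf : f ∈ Esp) : Continuous f :=
  hf.1.continuous

/-! ### The parametrization by Boolean sequences -/

def cf (a : ℕ → Bool) : ℕ → ℝ := fun n => if a n then 1 else 0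

theorem cf_binary (a : ℕ → Bool) : IsBinary (cf a) := fun n => by
  by_cases h : a n <;> simp [cf, h]

theorem cf_abs_le (a : ℕ → Bool) : ∀ n, |cf a n| ≤ 1 := fun n => by
  rcases cf_binary a n with h | h <;> simp [h]

theorem cf_inj : Function.Injective cf := by
  intro a b h
  funext n
  have := congrFun h n
  by_cases ha : a n <;> by_cases hb : b n <;> simp_all [cf]

noncomputable def Fb (a : ℕ → Bool) : ℝ → ℝ := (ser (cf a)).sum

theorem Fb_hasSum (a : ℕ → Bool) (x : ℝ) :
    HasSum (fun n : ℕ => cf a n / n.factorial * x ^ n) (Fb a x) :=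
  ser_hasSum _ (cf_abs_le a) x

theorem Fb_mem (a : ℕ → Bool) : Fb a ∈ Esp :=
  ⟨ser_contDiff _ (cf_abs_le a), cf a, cf_binary a, Fb_hasSum a⟩

theorem Fb_inj : Function.Injective Fb := by
  intro a b h
  apply cf_inj
  have ha := ((ser (cf a)).hasFPowerSeriesOnBall
    (by rw [ser_radius _ (cf_abs_le a)]; exact ENNReal.zero_lt_top)).hasFPowerSeriesAt
  have hb := ((ser (cf b)).hasFPowerSeriesOnBall
    (by rw [ser_radius _ (cf_abs_le b)]; exact ENNReal.zero_lt_top)).hasFPowerSeriesAt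
  rw [show (ser (cf a)).sum = (ser (cf b)).sum from h] at ha
  have hser : ser (cf a) = ser (cf b) := ha.eq_formalMultilinearSeries hb
  rw [ser, ser, FormalMultilinearSeries.ofScalars_series_eq_iff] at hser
  funext n
  have := congrFun hser n
  field_simp at this
  exact this

theorem Fb_surj : ∀ f ∈ Esp, ∃ a : ℕ → Bool, Fb a = f := by
  intro f hf
  obtain ⟨-, c, hb, hs⟩ := hf
  refine ⟨fun n => decide (c n = 1), ?_⟩
  have hcf : cf (fun n => decide (c n = 1)) = c := by
    funext n
    rcases hb n with h | h <;> simp [cf, h]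
  rw [eq_ser_sum hb hs, Fb, hcf]

noncomputable def e : (ℕ → Bool) ≃ ↥Esp :=
  Equiv.ofBijective (fun a => ⟨Fb a, Fb_mem a⟩)
    ⟨fun a b h => Fb_inj (congrArg Subtype.val h),
     fun f => by obtain ⟨a, ha⟩ := Fb_surj f.1 f.2; exact ⟨a, Subtype.ext ha⟩⟩

/-! ### Basic properties of the metric `rho` -/

theorem eLpNorm_fin {γ : ℝ} {p : ℝ≥0∞} {f : ℝ → ℝ} (hf : Continuous f) :
    eLpNorm f p (volume.restrict (Icc 0 γ)) < ⊤ := by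
  obtain ⟨C, hC⟩ := (isCompact_Icc (a := (0:ℝ)) (b := γ)).exists_bound_of_continuousOn
    hf.continuousOn
  have hae : ∀ᵐ x ∂(volume.restrict (Icc 0 γ)), ‖f x‖ ≤ C :=
    ae_restrict_of_forall_mem measurableSet_Icc hC
  refine (eLpNorm_le_of_ae_bound hae).trans_lt ?_
  rw [Measure.restrict_apply_univ]
  exact ENNReal.mul_lt_top
    (ENNReal.rpow_lt_top_of_nonneg (by positivity) (by simp [Real.volume_Icc]))
    ENNReal.ofReal_lt_top

theorem rho_self {γ : ℝ} {p : ℝ≥0∞} (f : ℝ → ℝ) : rho 0 γ p f f = 0 := by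
  simp [rho, sub_self]

theorem rho_symm {γ : ℝ} {p : ℝ≥0∞} (f g : ℝ → ℝ) : rho 0 γ p f g = rho 0 γ p g f := by
  unfold rho
  congr 1
  exact eLpNorm_sub_comm f g p _

theorem rho_triangle {γ : ℝ} {p : ℝ≥0∞} (hp : 1 ≤ p) {f g h : ℝ → ℝ}
    (hf : Continuous f) (hg : Continuous g) (hh : Continuous h) :
    rho 0 γ p f g ≤ rho 0 γ p f h + rho 0 γ p h g := by
  set μ := volume.restrict (Icc (0:ℝ) γ)
  have h1 : eLpNorm (fun x => f x - g x) p μ ≤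
      eLpNorm (fun x => f x - h x) p μ + eLpNorm (fun x => h x - g x) p μ := by
    have := eLpNorm_add_le (μ := μ) (p := p)
      ((hf.sub hh).aestronglyMeasurable) ((hh.sub hg).aestronglyMeasurable) hp
    have heq : (f - h) + (h - g) = fun x => f x - g x := by
      funext x; simp
    rw [heq] at this; exact this
  have h2 : eLpNorm (fun x => f x - h x) p μ < ⊤ := eLpNorm_fin (hf.sub hh)
  have h3 : eLpNorm (fun x => h x - g x) p μ < ⊤ := eLpNorm_fin (hh.sub hg)
  calc rho 0 γ p f g
      ≤ (eLpNorm (fun x => f x - h x) p μ + eLpNorm (fun x => h x - g x) p μ).toReal := by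
        apply ENNReal.toReal_mono (by finiteness) h1
    _ = rho 0 γ p f h + rho 0 γ p h g := ENNReal.toReal_add h2.ne h3.ne

theorem rho_pos {γ : ℝ} {p : ℝ≥0∞} (hγ : 0 < γ) (hp : 1 ≤ p) {f g : ℝ → ℝ}
    (hf : Continuous f) (hg : Continuous g)
    (hne : ∃ x ∈ Icc 0 γ, f x ≠ g x) : 0 < rho 0 γ p f g := by
  set μ := volume.restrict (Icc (0:ℝ) γ)
  have hmeas : AEStronglyMeasurable (fun x => f x - g x) μ := (hf.sub hg).aestronglyMeasurable
  have hp0 : p ≠ 0 := (lt_of_lt_of_le one_pos hp).ne'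
  have hnz : eLpNorm (fun x => f x - g x) p μ ≠ 0 := by
    rw [Ne, eLpNorm_eq_zero_iff hmeas hp0]
    intro hae
    obtain ⟨x₀, hx₀, hne₀⟩ := hne
    set U : Set ℝ := {x | f x - g x ≠ 0} with hU
    have hUopen : IsOpen U := isOpen_ne_fun (hf.sub hg) continuous_const
    have hx₀U : x₀ ∈ U := by simpa [hU, sub_eq_zero] using hne₀
    have hcl : x₀ ∈ closure (Ioo (0:ℝ) γ) := by
      rw [closure_Ioo hγ.ne]; exact hx₀
    obtain ⟨y, hyU, hyI⟩ := mem_closure_iff.1 hcl U hUopen hx₀U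
    have hpos : 0 < volume (U ∩ Ioo 0 γ) :=
      (hUopen.inter isOpen_Ioo).measure_pos volume ⟨y, hyU, hyI⟩
    have hz : μ {x | f x - g x ≠ 0} = 0 := by
      have := hae
      rw [Filter.EventuallyEq, ae_iff] at this
      simpa [Pi.zero_apply] using this
    rw [Measure.restrict_apply₀ (hUopen.measurableSet.nullMeasurableSet)] at hz
    have hle : volume (U ∩ Ioo 0 γ) ≤ volume (U ∩ Icc 0 γ) :=
      measure_mono (inter_subset_inter_right _ Ioo_subset_Icc_self)
    rw [hz] at hle
    exact absurd (le_antisymm hle zero_le) hpos.ne'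
  have hfin : eLpNorm (fun x => f x - g x) p μ ≠ ⊤ := (eLpNorm_fin (hf.sub hg)).ne
  exact ENNReal.toReal_pos hnz hfin

theorem mem_ne_on_Icc {γ : ℝ} (hγ : 0 < γ) {f g : ℝ → ℝ} (hf : f ∈ Esp) (hg : g ∈ Esp)
    (hne : f ≠ g) : ∃ x ∈ Icc 0 γ, f x ≠ g x := by
  by_contra h
  push_neg at h
  apply hne
  have h1 := mem_analytic hf
  have h2 := mem_analytic hg
  have heq : f =ᶠ[𝓝 (γ/2)] g := by
    have hmem : Icc 0 γ ∈ 𝓝 (γ/2) := Icc_mem_nhds (by positivity) (by linarith)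
    filter_upwards [hmem] with x hx using h x hx
  have := h1.eqOn_of_preconnected_of_eventuallyEq h2 isPreconnected_univ (mem_univ (γ/2)) heq
  funext x
  exact this (mem_univ x)

/-! ### The tail estimate -/

noncomputable def tl (γ : ℝ) (N : ℕ) : ℝ := ∑' n : ℕ, γ ^ (n + N) / (n + N).factorial

theorem tl_summable (γ : ℝ) (N : ℕ) :
    Summable (fun n : ℕ => γ ^ (n + N) / (n + N).factorial) :=
  (summable_nat_add_iff N).2 (Real.summable_pow_div_factorial γ)

theorem tl_nonneg {γ : ℝ} (hγ : 0 ≤ γ) (N : ℕ) : 0 ≤ tl γ N :=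
  tsum_nonneg fun n => by positivity

theorem tl_tendsto (γ : ℝ) : Tendsto (tl γ) atTop (𝓝 0) := by
  have := tendsto_sum_nat_add (fun n : ℕ => γ ^ n / n.factorial)
  exact this

theorem Fb_dist_le {γ : ℝ} (hγ : 0 ≤ γ) {a b : ℕ → Bool} {N : ℕ}
    (hab : ∀ n < N, a n = b n) {x : ℝ} (hx : x ∈ Icc 0 γ) :
    |Fb a x - Fb b x| ≤ tl γ N := by
  have hsum := (Fb_hasSum a x).sub (Fb_hasSum b x)
  set d : ℕ → ℝ := fun n => cf a n / n.factorial * x ^ n - cf b n / n.factorial * x ^ n with hd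
  have hbound : ∀ k : ℕ, ‖d k‖ ≤ γ ^ k / k.factorial := by
    intro k
    have hxk : |x| ^ k ≤ γ ^ k := by
      apply pow_le_pow_left₀ (abs_nonneg x)
      rw [abs_le]; exact ⟨by linarith [hx.1], hx.2⟩
    have hk : |cf a k - cf b k| ≤ 1 := by
      rcases cf_binary a k with h1 | h1 <;> rcases cf_binary b k with h2 | h2 <;>
        simp [h1, h2]
    have : d k = (cf a k - cf b k) * x ^ k / k.factorial := by rw [hd]; ring
    rw [this, Real.norm_eq_abs, abs_div, abs_mul, Nat.abs_cast, abs_pow]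
    rw [div_le_div_iff₀ (by positivity) (by positivity)]
    calc |cf a k - cf b k| * |x| ^ k * k.factorial ≤ 1 * γ ^ k * k.factorial := by
          gcongr
      _ = γ ^ k * k.factorial := by ring
  have hzero : ∀ n < N, d n = 0 := by
    intro n hn
    simp [hd, cf, hab n hn]
  have hds : Summable d := hsum.summable
  have htot := hds.sum_add_tsum_nat_add N
  have hsum0 : ∑ i ∈ Finset.range N, d i = 0 :=
    Finset.sum_eq_zero fun i hi => hzero i (Finset.mem_range.1 hi)
  have heq : Fb a x - Fb b x = ∑' n : ℕ, d (n + N) := by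
    rw [hsum.tsum_eq] at htot
    rw [hsum0, zero_add] at htot
    exact htot.symm
  rw [heq, ← Real.norm_eq_abs]
  have hsn : Summable fun n : ℕ => ‖d (n + N)‖ :=
    Summable.of_nonneg_of_le (fun n => norm_nonneg _) (fun n => hbound (n + N)) (tl_summable γ N)
  calc ‖∑' n : ℕ, d (n + N)‖ ≤ ∑' n : ℕ, ‖d (n + N)‖ := norm_tsum_le_tsum_norm hsn
    _ ≤ tl γ N := Summable.tsum_le_tsum (fun n => hbound (n + N)) hsn (tl_summable γ N)

noncomputable def Cc (γ : ℝ) (p : ℝ≥0∞) : ℝ :=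
  ((ENNReal.ofReal γ) ^ (p.toReal⁻¹)).toReal

theorem rho_Fb_le {γ : ℝ} (hγ : 0 < γ) (p : ℝ≥0∞) {a b : ℕ → Bool} {N : ℕ}
    (hab : ∀ n < N, a n = b n) :
    rho 0 γ p (Fb a) (Fb b) ≤ Cc γ p * tl γ N := by
  have hae : ∀ᵐ x ∂(volume.restrict (Icc (0:ℝ) γ)), ‖Fb a x - Fb b x‖ ≤ tl γ N := by
    apply ae_restrict_of_forall_mem measurableSet_Icc
    intro x hx
    rw [Real.norm_eq_abs]
    exact Fb_dist_le hγ.le hab hx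
  have h1 := eLpNorm_le_of_ae_bound (p := p) hae
  rw [Measure.restrict_apply_univ, Real.volume_Icc, sub_zero] at h1
  have hfin : (ENNReal.ofReal γ) ^ (p.toReal⁻¹) ≠ ⊤ :=
    (ENNReal.rpow_lt_top_of_nonneg (by positivity) ENNReal.ofReal_ne_top).ne
  calc rho 0 γ p (Fb a) (Fb b)
      ≤ ((ENNReal.ofReal γ) ^ (p.toReal⁻¹) * ENNReal.ofReal (tl γ N)).toReal := by
        apply ENNReal.toReal_mono _ h1
        exact ENNReal.mul_ne_top hfin ENNReal.ofReal_ne_top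
    _ = Cc γ p * tl γ N := by
        rw [ENNReal.toReal_mul, ENNReal.toReal_ofReal (tl_nonneg hγ.le N), Cc]

/-! ### Topological facts -/

theorem e_cont (γ : ℝ) (hγ : 0 < γ) (p : ℝ≥0∞) (hp : 1 ≤ p) :
    @Continuous (ℕ → Bool) ↥Esp _ (Etop γ p)
      (fun a : ℕ → Bool => (⟨Fb a, Fb_mem a⟩ : ↥Esp)) := by
  rw [Etop, continuous_generateFrom_iff]
  rintro U ⟨f, ε, hε, rfl⟩
  rw [isOpen_iff_mem_nhds]
  intro a₀ ha₀
  simp only [mem_preimage, mem_setOf_eq] at ha₀ ⊢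
  have hδ : 0 < ε - rho 0 γ p f.1 (Fb a₀) := sub_pos.2 ha₀
  have hC : Tendsto (fun N => Cc γ p * tl γ N) atTop (𝓝 0) := by
    simpa using (tl_tendsto γ).const_mul (Cc γ p)
  obtain ⟨N, hN⟩ := (hC.eventually (eventually_lt_nhds hδ)).exists
  set V : Set (ℕ → Bool) := ⋂ n ∈ Finset.range N, (fun a : ℕ → Bool => a n) ⁻¹' {a₀ n} with hV
  have hVopen : IsOpen V :=
    isOpen_biInter_finset fun n _ =>
      (continuous_apply n).isOpen_preimage _ (isOpen_discrete _)
  have ha₀V : a₀ ∈ V := by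
    simp [hV]
  apply Filter.mem_of_superset (hVopen.mem_nhds ha₀V)
  intro a haV
  have hab : ∀ n < N, a n = a₀ n := by
    intro n hn
    have := mem_iInter₂.1 haV n (Finset.mem_range.2 hn)
    simpa using this
  simp only [mem_preimage, mem_setOf_eq]
  have htri : rho 0 γ p f.1 (Fb a) ≤ rho 0 γ p f.1 (Fb a₀) + rho 0 γ p (Fb a₀) (Fb a) :=
    rho_triangle hp (mem_continuous f.2) (mem_continuous (Fb_mem a))
      (mem_continuous (Fb_mem a₀))
  have hle : rho 0 γ p (Fb a₀) (Fb a) ≤ Cc γ p * tl γ N :=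
    rho_Fb_le hγ p fun n hn => (hab n hn).symm
  linarith

theorem etop_t2 (γ : ℝ) (hγ : 0 < γ) (p : ℝ≥0∞) (hp : 1 ≤ p) :
    @T2Space ↥Esp (Etop γ p) := by
  letI := Etop γ p
  constructor
  intro x y hxy
  have hne : x.1 ≠ y.1 := fun h => hxy (Subtype.ext h)
  have hd : 0 < rho 0 γ p x.1 y.1 :=
    rho_pos hγ hp (mem_continuous x.2) (mem_continuous y.2)
      (mem_ne_on_Icc hγ x.2 y.2 hne)
  set d := rho 0 γ p x.1 y.1 with hdd
  refine ⟨{g : ↥Esp | rho 0 γ p x.1 g.1 < d/2}, {g : ↥Esp | rho 0 γ p y.1 g.1 < d/2},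
    ?_, ?_, ?_, ?_, ?_⟩
  · exact TopologicalSpace.isOpen_generateFrom_of_mem ⟨x, d/2, by linarith, rfl⟩
  · exact TopologicalSpace.isOpen_generateFrom_of_mem ⟨y, d/2, by linarith, rfl⟩
  · simp only [mem_setOf_eq, rho_self]; linarith
  · simp only [mem_setOf_eq, rho_self]; linarith
  · rw [Set.disjoint_left]
    rintro g hg1 hg2
    simp only [mem_setOf_eq] at hg1 hg2
    have htri : d ≤ rho 0 γ p x.1 g.1 + rho 0 γ p g.1 y.1 :=
      rho_triangle hp (mem_continuous x.2) (mem_continuous y.2) (mem_continuous g.2)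
    rw [rho_symm (γ := γ) (p := p) g.1 y.1] at htri
    linarith

theorem cantor_not_isolated (a : ℕ → Bool) : ¬ IsOpen {a} := by
  intro h
  have hmem : {a} ∈ 𝓝 a := h.mem_nhds rfl
  set b : ℕ → (ℕ → Bool) := fun m => Function.update a m (!(a m)) with hb
  have htend : Tendsto b atTop (𝓝 a) := by
    rw [tendsto_pi_nhds]
    intro k
    apply tendsto_const_nhds.congr'
    filter_upwards [eventually_gt_atTop k] with m hm
    exact (Function.update_of_ne (by omega) _ _).symm
  obtain ⟨m, hm⟩ := (htend.eventually_mem hmem).exists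
  have : b m m = a m := by rw [show b m = a from hm]
  rw [hb] at this
  simp at this

end Stmt2Aux

/-- Fix `γ > 0` and `1 ≤ p ≤ ∞`. The metric space `(E, ρ_p)` is a
Cantor set: it is nonempty, compact, metrizable, totally disconnected, and has no
isolated points (no singleton is open). -/
theorem stmt2 (γ : ℝ) (hγ : 0 < γ) (p : ℝ≥0∞) (hp : 1 ≤ p) :
    Esp.Nonempty ∧
    @CompactSpace ↥Esp (Etop γ p) ∧
    @TopologicalSpace.MetrizableSpace ↥Esp (Etop γ p) ∧
    @TotallyDisconnectedSpace ↥Esp (Etop γ p) ∧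
    (∀ x : ↥Esp, ¬ @IsOpen ↥Esp (Etop γ p) {x}) := by
    classical
  letI := Etop γ p
  haveI hT2 : T2Space ↥Esp := Stmt2Aux.etop_t2 γ hγ p hp
  have hcont : Continuous ⇑(Stmt2Aux.e) := Stmt2Aux.e_cont γ hγ p hp
  let h : (ℕ → Bool) ≃ₜ ↥Esp := Continuous.homeoOfEquivCompactToT2 (f := Stmt2Aux.e) hcont
  refine ⟨⟨Stmt2Aux.Fb (fun _ => false), Stmt2Aux.Fb_mem _⟩, h.compactSpace, ?_, ?_, ?_⟩
  · exact h.symm.isEmbedding.metrizableSpace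
  · exact (h.symm.isEmbedding.isTotallyDisconnected_range).1
      (isTotallyDisconnected_of_totallyDisconnectedSpace _)
  · intro x hx
    have hopen : IsOpen (⇑Stmt2Aux.e ⁻¹' {x}) := hx.preimage hcont
    have hpre : ⇑Stmt2Aux.e ⁻¹' {x} = {Stmt2Aux.e.symm x} := by
      ext a
      simp [Equiv.apply_eq_iff_eq_symm_apply]
    rw [hpre] at hopen
    exact Stmt2Aux.cantor_not_isolated _ hopen
end

section
/- Fix γ > 0, 1 ≤ p ≤ ∞, and a finite set F ⊂ ℝ with 2 ≤ #F < ∞. Then the differential operator d/dx is chaotic in the sense of Devaney on the metric space (E_F, ρ_p): the set of periodic points of d/dx in E_F is dense in (E_F, ρ_p), and d/dx is topologically transitive on (E_F, ρ_p). -/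
set_option maxHeartbeats 1000000


open MeasureTheory Set Filter
open scoped ENNReal Topology

/-- The set `E_F` of smooth functions of the form `Σ aₙ/n! xⁿ` with all
coefficients `aₙ` in the finite set `F`. -/
def EFsp (F : Finset ℝ) : Set (ℝ → ℝ) :=
  {f | ContDiff ℝ (⊤ : ℕ∞) f ∧ ∃ a : ℕ → ℝ, (∀ n, a n ∈ F) ∧
    ∀ x : ℝ, HasSum (fun n : ℕ => a n / (Nat.factorial n : ℝ) * x ^ n) (f x)}

noncomputable def fs (a : ℕ → ℝ) (x : ℝ) : ℝ := ∑' n : ℕ, a n / (Nat.factorial n : ℝ) * x ^ n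

lemma summable_fs {a : ℕ → ℝ} {C : ℝ} (ha : ∀ n, |a n| ≤ C) (x : ℝ) :
    Summable (fun n : ℕ => a n / (Nat.factorial n : ℝ) * x ^ n) := by
  apply Summable.of_norm_bounded (g := fun n => C * (|x| ^ n / (Nat.factorial n : ℝ)))
    ((Real.summable_pow_div_factorial |x|).mul_left C)
  intro n
  have h1 : (0:ℝ) < (Nat.factorial n : ℝ) := by positivity
  have he : ‖a n / (Nat.factorial n : ℝ) * x ^ n‖ = |a n| * (|x| ^ n / (Nat.factorial n : ℝ)) := by
    rw [Real.norm_eq_abs, abs_mul, abs_div, abs_pow, Nat.abs_cast]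
    ring
  rw [he]
  exact mul_le_mul_of_nonneg_right (ha n) (by positivity)

lemma hasSum_fs {a : ℕ → ℝ} {C : ℝ} (ha : ∀ n, |a n| ≤ C) (x : ℝ) :
    HasSum (fun n : ℕ => a n / (Nat.factorial n : ℝ) * x ^ n) (fs a x) :=
  (summable_fs ha x).hasSum

lemma hasDerivAt_fs {a : ℕ → ℝ} {C : ℝ} (ha : ∀ n, |a n| ≤ C) (x : ℝ) :
    HasDerivAt (fs a) (fs (fun n => a (n + 1)) x) x := by
  have hC : 0 ≤ C := (abs_nonneg _).trans (ha 0)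
  set R : ℝ := |x| + 1 with hR
  have hRpos : 0 < R := by positivity
  set u : ℕ → ℝ := fun n => C * ((n : ℝ) * R ^ (n - 1) / (Nat.factorial n : ℝ)) with hu
  have hu_succ : ∀ n : ℕ, u (n + 1) = C * (R ^ n / (Nat.factorial n : ℝ)) := by
    intro n
    simp only [hu, Nat.add_sub_cancel, Nat.factorial_succ, Nat.cast_mul, Nat.cast_add,
      Nat.cast_one]
    congr 1
    have h1 : ((n : ℝ) + 1) ≠ 0 := by positivity
    have h2 : (Nat.factorial n : ℝ) ≠ 0 := by positivity
    field_simp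
  have husum : Summable u := by
    rw [← summable_nat_add_iff 1]
    simp only [hu_succ]
    exact (Real.summable_pow_div_factorial R).mul_left C
  have hg : ∀ (n : ℕ), ∀ y ∈ Metric.ball (0:ℝ) R,
      HasDerivAt (fun z : ℝ => a n / (Nat.factorial n : ℝ) * z ^ n)
        (a n / (Nat.factorial n : ℝ) * ((n : ℝ) * y ^ (n - 1))) y := by
    intro n y _
    exact (hasDerivAt_pow n y).const_mul _
  have hg' : ∀ (n : ℕ), ∀ y ∈ Metric.ball (0:ℝ) R,
      ‖a n / (Nat.factorial n : ℝ) * ((n : ℝ) * y ^ (n - 1))‖ ≤ u n := by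
    intro n y hy
    have hyR : |y| ≤ R := le_of_lt (by simpa [Real.dist_eq] using hy)
    have h1 : (0:ℝ) < (Nat.factorial n : ℝ) := by positivity
    have he : ‖a n / (Nat.factorial n : ℝ) * ((n : ℝ) * y ^ (n - 1))‖
        = |a n| * ((n : ℝ) * |y| ^ (n - 1) / (Nat.factorial n : ℝ)) := by
      rw [Real.norm_eq_abs, abs_mul, abs_mul, abs_div, abs_pow, Nat.abs_cast, Nat.abs_cast]
      ring
    rw [he, hu]
    have h2 : (n : ℝ) * |y| ^ (n - 1) / (Nat.factorial n : ℝ)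
        ≤ (n : ℝ) * R ^ (n - 1) / (Nat.factorial n : ℝ) := by
      gcongr
    calc |a n| * ((n : ℝ) * |y| ^ (n - 1) / (Nat.factorial n : ℝ))
        ≤ C * ((n : ℝ) * |y| ^ (n - 1) / (Nat.factorial n : ℝ)) :=
          mul_le_mul_of_nonneg_right (ha n) (by positivity)
      _ ≤ C * ((n : ℝ) * R ^ (n - 1) / (Nat.factorial n : ℝ)) :=
          mul_le_mul_of_nonneg_left h2 hC
  have hx : x ∈ Metric.ball (0:ℝ) R := by
    simp [Real.dist_eq, hR]
  have key := hasDerivAt_tsum_of_isPreconnected husum Metric.isOpen_ball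
    (convex_ball (0:ℝ) R).isPreconnected
    hg hg' hx (summable_fs ha x) hx
  have hsum' : Summable fun n : ℕ =>
      a n / (Nat.factorial n : ℝ) * ((n : ℝ) * x ^ (n - 1)) :=
    Summable.of_norm_bounded (g := u) husum (fun n => hg' n x hx)
  have heq : (∑' n : ℕ, a n / (Nat.factorial n : ℝ) * ((n : ℝ) * x ^ (n - 1)))
      = fs (fun n => a (n + 1)) x := by
    have h0 := (Summable.sum_add_tsum_nat_add 1 hsum').symm
    rw [Finset.sum_range_one] at h0
    simp only [Nat.cast_zero, zero_mul, mul_zero, zero_add] at h0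
    rw [h0, fs]
    congr 1
    ext n
    have h2 : (Nat.factorial n : ℝ) ≠ 0 := by positivity
    have h3 : ((n : ℝ) + 1) ≠ 0 := by positivity
    simp only [Nat.add_sub_cancel, Nat.factorial_succ, Nat.cast_mul, Nat.cast_add, Nat.cast_one]
    field_simp
  rw [← heq]
  exact key

lemma deriv_fs {a : ℕ → ℝ} {C : ℝ} (ha : ∀ n, |a n| ≤ C) :
    deriv (fs a) = fs (fun n => a (n + 1)) :=
  funext fun x => (hasDerivAt_fs ha x).deriv

lemma iterate_deriv_fs {a : ℕ → ℝ} {C : ℝ} (ha : ∀ n, |a n| ≤ C) (m : ℕ) :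
    deriv^[m] (fs a) = fs (fun n => a (n + m)) := by
  induction m with
  | zero => simp [fs]
  | succ m ih =>
    rw [Function.iterate_succ', Function.comp_apply, ih,
      deriv_fs (a := fun n => a (n + m)) (C := C) (fun n => ha (n + m))]
    have he : (fun n : ℕ => a (n + 1 + m)) = (fun n : ℕ => a (n + (m + 1))) := by
      funext n
      congr 1
      omega
    exact congrArg fs he

lemma contDiff_fs {a : ℕ → ℝ} {C : ℝ} (ha : ∀ n, |a n| ≤ C) :
    ContDiff ℝ (⊤ : ℕ∞) (fs a) := by
  apply contDiff_of_differentiable_iteratedDeriv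
  intro m _
  rw [iteratedDeriv_eq_iterate, iterate_deriv_fs ha m]
  exact fun x => (hasDerivAt_fs (a := fun n => a (n + m)) (fun n => ha (n + m)) x).differentiableAt

lemma fs_mem_EFsp {F : Finset ℝ} {a : ℕ → ℝ} {C : ℝ} (ha : ∀ n, |a n| ≤ C)
    (haF : ∀ n, a n ∈ F) : fs a ∈ EFsp F :=
  ⟨contDiff_fs ha, a, haF, fun x => hasSum_fs ha x⟩

lemma rho_le_of_bound {γ : ℝ} (hγ : 0 ≤ γ) (p : ℝ≥0∞) (f g : ℝ → ℝ) {δ : ℝ} (hδ : 0 ≤ δ)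
    (hb : ∀ x ∈ Icc (0:ℝ) γ, |f x - g x| ≤ δ) :
    rho 0 γ p f g ≤ ((volume (Icc (0:ℝ) γ)) ^ (p.toReal)⁻¹).toReal * δ := by
  have hae : ∀ᵐ x ∂(volume.restrict (Icc (0:ℝ) γ)), ‖f x - g x‖ ≤ δ :=
    (ae_restrict_iff' measurableSet_Icc).2 (ae_of_all _ fun x hx => hb x hx)
  have h := eLpNorm_le_of_ae_bound (p := p) hae
  rw [Measure.restrict_apply_univ] at h
  have h1 : (volume (Icc (0:ℝ) γ)) ^ (p.toReal)⁻¹ ≠ ⊤ :=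
    ENNReal.rpow_ne_top_of_nonneg (by positivity) measure_Icc_lt_top.ne
  have hfin : (volume (Icc (0:ℝ) γ)) ^ (p.toReal)⁻¹ * ENNReal.ofReal δ ≠ ⊤ :=
    ENNReal.mul_ne_top h1 ENNReal.ofReal_ne_top
  calc rho 0 γ p f g ≤ ((volume (Icc (0:ℝ) γ)) ^ (p.toReal)⁻¹ * ENNReal.ofReal δ).toReal :=
        ENNReal.toReal_mono hfin h
    _ = ((volume (Icc (0:ℝ) γ)) ^ (p.toReal)⁻¹).toReal * δ := by
        rw [ENNReal.toReal_mul, ENNReal.toReal_ofReal hδ]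

lemma fs_close {a b : ℕ → ℝ} {C : ℝ} (ha : ∀ n, |a n| ≤ C) (hb : ∀ n, |b n| ≤ C)
    (N : ℕ) (hagree : ∀ n < N, a n = b n) {γ : ℝ} (hγ : 0 ≤ γ) :
    ∀ x ∈ Icc (0:ℝ) γ, |fs a x - fs b x|
      ≤ 2 * C * ∑' k : ℕ, γ ^ (k + N) / ((k + N).factorial : ℝ) := by
  intro x hx
  obtain ⟨hx0, hxγ⟩ := hx
  have hC : 0 ≤ C := (abs_nonneg _).trans (ha 0)
  have hsa := summable_fs ha x
  have hsb := summable_fs hb x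
  set t : ℕ → ℝ := fun n => a n / (Nat.factorial n : ℝ) * x ^ n
      - b n / (Nat.factorial n : ℝ) * x ^ n with ht
  have hts : Summable t := hsa.sub hsb
  have hd : fs a x - fs b x = ∑' n, t n := ((hsa.hasSum.sub hsb.hasSum).tsum_eq).symm
  have hbound : ∀ n, ‖t n‖ ≤ 2 * C * (γ ^ n / (Nat.factorial n : ℝ)) := by
    intro n
    have h1 : (0:ℝ) < (Nat.factorial n : ℝ) := by positivity
    have he : ‖t n‖ = |a n - b n| * (|x| ^ n / (Nat.factorial n : ℝ)) := by
      simp only [ht, Real.norm_eq_abs]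
      rw [show a n / (Nat.factorial n : ℝ) * x ^ n - b n / (Nat.factorial n : ℝ) * x ^ n
        = (a n - b n) / (Nat.factorial n : ℝ) * x ^ n by ring]
      rw [abs_mul, abs_div, abs_pow, Nat.abs_cast]
      ring
    rw [he]
    have h2 : |a n - b n| ≤ 2 * C := by
      calc |a n - b n| ≤ |a n| + |b n| := abs_sub _ _
        _ ≤ 2 * C := by linarith [ha n, hb n]
    have hxg : |x| ≤ γ := by rw [abs_of_nonneg hx0]; exact hxγ
    have h3 : |x| ^ n / (Nat.factorial n : ℝ) ≤ γ ^ n / (Nat.factorial n : ℝ) := by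
      gcongr
    calc |a n - b n| * (|x| ^ n / (Nat.factorial n : ℝ))
        ≤ (2 * C) * (|x| ^ n / (Nat.factorial n : ℝ)) :=
          mul_le_mul_of_nonneg_right h2 (by positivity)
      _ ≤ 2 * C * (γ ^ n / (Nat.factorial n : ℝ)) :=
          mul_le_mul_of_nonneg_left h3 (by positivity)
  have hnorm_s : Summable fun n => ‖t n‖ :=
    Summable.of_nonneg_of_le (fun n => norm_nonneg _) hbound
      (((Real.summable_pow_div_factorial γ).mul_left (2 * C)))
  have h1 : |fs a x - fs b x| ≤ ∑' n, ‖t n‖ := by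
    rw [hd]
    exact norm_tsum_le_tsum_norm hnorm_s
  have h2 : ∑' n, ‖t n‖ = ∑' k, ‖t (k + N)‖ := by
    have := (Summable.sum_add_tsum_nat_add N hnorm_s).symm
    have hz : ∑ i ∈ Finset.range N, ‖t i‖ = 0 := by
      apply Finset.sum_eq_zero
      intro i hi
      simp only [ht, hagree i (Finset.mem_range.mp hi), sub_self, norm_zero]
    rw [this, hz, zero_add]
  have h3 : ∑' k, ‖t (k + N)‖ ≤ ∑' k : ℕ, 2 * C * (γ ^ (k + N) / ((k + N).factorial : ℝ)) := by
    apply Summable.tsum_le_tsum (fun k => hbound (k + N))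
    · exact (summable_nat_add_iff N).2 hnorm_s
    · exact (summable_nat_add_iff N).2 (((Real.summable_pow_div_factorial γ).mul_left (2 * C)))
  rw [tsum_mul_left] at h3
  calc |fs a x - fs b x| ≤ ∑' n, ‖t n‖ := h1
    _ = ∑' k, ‖t (k + N)‖ := h2
    _ ≤ 2 * C * ∑' k : ℕ, γ ^ (k + N) / ((k + N).factorial : ℝ) := h3

/-- Fix `γ > 0`, `1 ≤ p ≤ ∞` and a finite set `F ⊂ ℝ` with `#F ≥ 2`.
The set `E_F` is invariant under `d/dx`, and `d/dx` is Devaney chaotic on `(E_F, ρ_p)`: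
its periodic points are dense in `(E_F, ρ_p)`, and it is topologically transitive on
`(E_F, ρ_p)` (expressed in the equivalent ε-form for metric spaces). -/
theorem stmt3 (γ : ℝ) (hγ : 0 < γ) (p : ℝ≥0∞) (hp : 1 ≤ p)
    (F : Finset ℝ) (hF : 2 ≤ F.card) :
    (∀ f ∈ EFsp F, deriv f ∈ EFsp F) ∧
    (∀ f ∈ EFsp F, ∀ ε > (0 : ℝ), ∃ g ∈ EFsp F,
      (∃ m : ℕ, 1 ≤ m ∧ Set.EqOn (deriv^[m] g) g (Icc 0 γ)) ∧ rho 0 γ p f g < ε) ∧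
    (∀ f ∈ EFsp F, ∀ g ∈ EFsp F, ∀ ε > (0 : ℝ), ∃ h ∈ EFsp F, ∃ n : ℕ,
      rho 0 γ p f h < ε ∧ rho 0 γ p (deriv^[n] h) g < ε) := by
  have hne : F.Nonempty := Finset.card_pos.mp (by omega)
  set C : ℝ := F.sup' hne (fun y => |y|) with hCdef
  have hCF : ∀ y ∈ F, |y| ≤ C := fun y hy => Finset.le_sup' _ hy
  have hC0 : 0 ≤ C := (abs_nonneg _).trans (hCF _ hne.choose_spec)
  have hγ0 : (0:ℝ) ≤ γ := hγ.le
  set K : ℝ := ((volume (Icc (0:ℝ) γ)) ^ (p.toReal)⁻¹).toReal with hK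
  have hK0 : 0 ≤ K := ENNReal.toReal_nonneg
  have tail_small : ∀ δ > (0:ℝ), ∃ N : ℕ, 1 ≤ N ∧
      2 * C * ∑' k : ℕ, γ ^ (k + N) / ((k + N).factorial : ℝ) ≤ δ := by
    intro δ hδ
    have ht := tendsto_sum_nat_add (f := fun n : ℕ => γ ^ n / (Nat.factorial n : ℝ))
    rw [Metric.tendsto_atTop] at ht
    obtain ⟨N₀, hN₀⟩ := ht (δ / (2 * C + 1)) (by positivity)
    refine ⟨max N₀ 1, le_max_right _ _, ?_⟩
    have h1 := hN₀ (max N₀ 1) (le_max_left _ _)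
    rw [Real.dist_eq, sub_zero] at h1
    have h2 : ∑' k : ℕ, γ ^ (k + max N₀ 1) / ((k + max N₀ 1).factorial : ℝ)
        ≤ δ / (2 * C + 1) := (le_abs_self _).trans h1.le
    calc 2 * C * ∑' k : ℕ, γ ^ (k + max N₀ 1) / ((k + max N₀ 1).factorial : ℝ)
        ≤ 2 * C * (δ / (2 * C + 1)) := mul_le_mul_of_nonneg_left h2 (by positivity)
      _ ≤ δ := by
          rw [show 2 * C * (δ / (2 * C + 1)) = 2 * C * δ / (2 * C + 1) by ring,
            div_le_iff₀ (by positivity)]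
          nlinarith
  have hKlt : ∀ ε > (0:ℝ), K * (ε / (K + 1)) < ε := by
    intro ε hε
    rw [show K * (ε / (K + 1)) = K * ε / (K + 1) by ring, div_lt_iff₀ (by positivity)]
    nlinarith
  refine ⟨?_, ?_, ?_⟩
  · rintro f ⟨hcd, a, haF, hsum⟩
    have ha : ∀ n, |a n| ≤ C := fun n => hCF _ (haF n)
    have hfeq : f = fs a := funext fun x => ((hsum x).tsum_eq).symm
    rw [hfeq, deriv_fs ha]
    exact fs_mem_EFsp (fun n => hCF _ (haF (n + 1))) (fun n => haF (n + 1))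
  · rintro f ⟨hcd, a, haF, hsum⟩ ε hε
    have ha : ∀ n, |a n| ≤ C := fun n => hCF _ (haF n)
    have hfeq : f = fs a := funext fun x => ((hsum x).tsum_eq).symm
    set δ : ℝ := ε / (K + 1) with hδdef
    have hδ0 : 0 < δ := by positivity
    obtain ⟨N, hN1, htail⟩ := tail_small δ hδ0
    set b : ℕ → ℝ := fun n => a (n % N) with hbdef
    have hbF : ∀ n, b n ∈ F := fun n => haF _
    have hb : ∀ n, |b n| ≤ C := fun n => hCF _ (hbF n)
    refine ⟨fs b, fs_mem_EFsp hb hbF, ⟨N, hN1, ?_⟩, ?_⟩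
    · rw [iterate_deriv_fs hb N]
      have hper : (fun n => b (n + N)) = b := by
        funext n
        show a ((n + N) % N) = a (n % N)
        rw [Nat.add_mod_right]
      rw [hper]
      exact fun x _ => rfl
    · have hagree : ∀ n < N, a n = b n := fun n hn => by
        show a n = a (n % N)
        rw [Nat.mod_eq_of_lt hn]
      have hbd : ∀ x ∈ Icc (0:ℝ) γ, |fs a x - fs b x| ≤ δ :=
        fun x hx => (fs_close ha hb N hagree hγ0 x hx).trans htail
      have hle := rho_le_of_bound hγ0 p (fs a) (fs b) hδ0.le hbd
      rw [hfeq]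
      exact lt_of_le_of_lt hle (hKlt ε hε)
  · rintro f ⟨hcd, a, haF, hsumf⟩ g ⟨hcdg, b, hbF, hsumg⟩ ε hε
    have ha : ∀ n, |a n| ≤ C := fun n => hCF _ (haF n)
    have hb : ∀ n, |b n| ≤ C := fun n => hCF _ (hbF n)
    have hfeq : f = fs a := funext fun x => ((hsumf x).tsum_eq).symm
    have hgeq : g = fs b := funext fun x => ((hsumg x).tsum_eq).symm
    set δ : ℝ := ε / (K + 1) with hδdef
    have hδ0 : 0 < δ := by positivity
    obtain ⟨N, hN1, htail⟩ := tail_small δ hδ0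
    set c : ℕ → ℝ := fun n => if n < N then a n else b (n - N) with hcdef
    have hcF : ∀ n, c n ∈ F := by
      intro n
      show (if n < N then a n else b (n - N)) ∈ F
      by_cases h : n < N
      · rw [if_pos h]; exact haF n
      · rw [if_neg h]; exact hbF (n - N)
    have hc : ∀ n, |c n| ≤ C := fun n => hCF _ (hcF n)
    refine ⟨fs c, fs_mem_EFsp hc hcF, N, ?_, ?_⟩
    · have hagree : ∀ n < N, a n = c n := fun n hn => by
        show a n = if n < N then a n else b (n - N)
        rw [if_pos hn]
      have hbd : ∀ x ∈ Icc (0:ℝ) γ, |fs a x - fs c x| ≤ δ :=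
        fun x hx => (fs_close ha hc N hagree hγ0 x hx).trans htail
      have hle := rho_le_of_bound hγ0 p (fs a) (fs c) hδ0.le hbd
      rw [hfeq]
      exact lt_of_le_of_lt hle (hKlt ε hε)
    · have hshift : deriv^[N] (fs c) = fs b := by
        rw [iterate_deriv_fs hc N]
        apply congrArg fs
        funext n
        show (if n + N < N then a (n + N) else b (n + N - N)) = b n
        rw [if_neg (by omega), Nat.add_sub_cancel]
      rw [hshift, hgeq]
      have h0 : (fun x => fs b x - fs b x) = fun _ : ℝ => (0:ℝ) := by
        funext x; ring
      rw [rho, h0]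
      simpa using hε
end

section
/- Fix γ > 0 and 1 ≤ p ≤ ∞. For every f ∈ C^∞([0,γ]) and every ε > 0 there exists a finite set F ⊂ ℝ with 2 ≤ #F < ∞ such that the ρ_p-distance from f to E_F satisfies inf_{g ∈ E_F} ρ_p(f,g) < ε. In other words, the union of the d/dx-invariant sets E_F over all finite F ⊂ ℝ with #F ≥ 2 is dense in (C^∞([0,γ]), ρ_p). -/
open MeasureTheory Set Filter
open scoped ENNReal Topology

/-- Fix `γ > 0` and `1 ≤ p ≤ ∞`. For every smooth `f` on `[0, γ]` and
every `ε > 0` there is a finite set `F ⊂ ℝ` with `#F ≥ 2` such that the `ρ_p`-distance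
from `f` to `E_F` is `< ε`; i.e. some `g ∈ E_F` satisfies `ρ_p(f, g) < ε`, so the union
of the sets `E_F` over finite `F` with `#F ≥ 2` is dense in `(C^∞([0, γ]), ρ_p)`. -/
theorem stmt4 (γ : ℝ) (hγ : 0 < γ) (p : ℝ≥0∞) (hp : 1 ≤ p) :
    ∀ f : ℝ → ℝ, ContDiff ℝ (⊤ : ℕ∞) f → ∀ ε > (0 : ℝ),
      ∃ F : Finset ℝ, 2 ≤ F.card ∧ ∃ g ∈ EFsp F, rho 0 γ p f g < ε := by
  intro f hf ε hε
  set M : ℝ := ((ENNReal.ofReal γ) ^ p.toReal⁻¹).toReal with hMdef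
  have hM0 : 0 ≤ M := ENNReal.toReal_nonneg
  set δ : ℝ := ε / (2 * (M + 1)) with hδdef
  have hδ : 0 < δ := by positivity
  obtain ⟨P, hP⟩ := exists_polynomial_near_of_continuousOn 0 γ f
    hf.continuous.continuousOn δ hδ
  set a : ℕ → ℝ := fun n => P.coeff n * n.factorial with hadef
  set F : Finset ℝ :=
    ({0, 1} : Finset ℝ) ∪ (Finset.range (P.natDegree + 1)).image a with hFdef
  refine ⟨F, ?_, fun x => P.eval x, ⟨?_, a, ?_, ?_⟩, ?_⟩
  · calc (2 : ℕ) = ({0, 1} : Finset ℝ).card := (Finset.card_pair (by norm_num)).symm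
      _ ≤ F.card := Finset.card_le_card Finset.subset_union_left
  · have : (fun x : ℝ => P.eval x)
        = fun x => ∑ i ∈ Finset.range (P.natDegree + 1), P.coeff i * x ^ i :=
      funext fun x => Polynomial.eval_eq_sum_range x
    rw [this]
    exact ContDiff.sum fun i _ => contDiff_const.mul (contDiff_id.pow i)
  · intro n
    by_cases h : n < P.natDegree + 1
    · exact Finset.mem_union_right _
        (Finset.mem_image.mpr ⟨n, Finset.mem_range.mpr h, rfl⟩)
    · have : P.coeff n = 0 :=
        Polynomial.coeff_eq_zero_of_natDegree_lt (by omega)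
      apply Finset.mem_union_left
      simp [hadef, this]
  · intro x
    have hfun : (fun n : ℕ => a n / (n.factorial : ℝ) * x ^ n)
        = fun n : ℕ => P.coeff n * x ^ n := by
      funext n
      have : (n.factorial : ℝ) ≠ 0 := Nat.cast_ne_zero.mpr n.factorial_ne_zero
      simp only [hadef]
      field_simp
    rw [hfun]
    have hvan : ∀ n ∉ Finset.range (P.natDegree + 1), P.coeff n * x ^ n = 0 := by
      intro n hn
      rw [Polynomial.coeff_eq_zero_of_natDegree_lt
        (by simpa using Finset.mem_range.not.mp hn), zero_mul]
    have : HasSum (fun n : ℕ => P.coeff n * x ^ n) _ := hasSum_sum_of_ne_finset_zero hvan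
    rwa [← Polynomial.eval_eq_sum_range x] at this
  · have hae : ∀ᵐ x ∂(volume.restrict (Icc 0 γ)), ‖f x - P.eval x‖ ≤ δ := by
      filter_upwards [ae_restrict_mem measurableSet_Icc] with x hx
      have := hP x hx
      rw [Real.norm_eq_abs, abs_sub_comm]
      linarith
    have hb := eLpNorm_le_of_ae_bound (p := p) hae
    rw [Measure.restrict_apply_univ, Real.volume_Icc, sub_zero] at hb
    have hBne : (ENNReal.ofReal γ) ^ p.toReal⁻¹ * ENNReal.ofReal δ ≠ ⊤ := by
      apply ENNReal.mul_ne_top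
      · exact ENNReal.rpow_ne_top_of_nonneg (by positivity) ENNReal.ofReal_ne_top
      · exact ENNReal.ofReal_ne_top
    have h1 : rho 0 γ p f (fun x => P.eval x)
        ≤ ((ENNReal.ofReal γ) ^ p.toReal⁻¹ * ENNReal.ofReal δ).toReal :=
      ENNReal.toReal_mono hBne hb
    have h2 : ((ENNReal.ofReal γ) ^ p.toReal⁻¹ * ENNReal.ofReal δ).toReal = M * δ := by
      rw [ENNReal.toReal_mul, ENNReal.toReal_ofReal hδ.le]
    have h3 : M * δ < ε := by
      rw [hδdef]
      rw [div_eq_mul_inv]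
      have h2M : (0:ℝ) < 2 * (M + 1) := by positivity
      calc M * (ε * (2 * (M + 1))⁻¹) = (M / (2 * (M + 1))) * ε := by
            ring
        _ < 1 * ε := by
            apply mul_lt_mul_of_pos_right _ hε
            rw [div_lt_one h2M]; linarith
        _ = ε := one_mul ε
    calc rho 0 γ p f (fun x => P.eval x) ≤ M * δ := h2 ▸ h1
      _ < ε := h3
end

section
/- Fix γ > 0 and 1 ≤ p ≤ ∞. For every f ∈ C^∞([0,γ]) there exists a sequence of finite sets F(n) ⊂ ℝ, n ≥ 1, such that: (1) 2 ≤ #F(n) < ∞ for every n; (2) E_{F(n)} ⊆ E_{F(n+1)} for every n; (3) f lies in the closure, with respect to ρ_p, of ⋃_{n=1}^∞ E_{F(n)}. -/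
open MeasureTheory Set Filter
open scoped ENNReal Topology

lemma EFsp_mono {F F' : Finset ℝ} (h : F ⊆ F') : EFsp F ⊆ EFsp F' := by
  rintro g ⟨hg, a, ha, hs⟩
  exact ⟨hg, a, fun n => h (ha n), hs⟩

/-- A polynomial, as a function, belongs to `EFsp` of any finite set containing `0`
and all its rescaled coefficients. -/
lemma poly_mem_EFsp (q : Polynomial ℝ) :
    (fun x : ℝ => q.eval x) ∈
      EFsp (insert (0:ℝ)
        ((Finset.range (q.natDegree + 1)).image fun n => (n.factorial : ℝ) * q.coeff n)) := by
  refine ⟨?_, fun n => (n.factorial : ℝ) * q.coeff n, ?_, ?_⟩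
  · have h : (fun x : ℝ => q.eval x)
        = fun x => ∑ n ∈ Finset.range (q.natDegree + 1), q.coeff n * x ^ n := by
      funext x; exact q.eval_eq_sum_range x
    rw [h]
    exact ContDiff.sum fun i _ => contDiff_const.mul (contDiff_id.pow i)
  · intro n
    by_cases hn : n < q.natDegree + 1
    · exact Finset.mem_insert_of_mem
        (Finset.mem_image.2 ⟨n, Finset.mem_range.2 hn, rfl⟩)
    · have : q.coeff n = 0 := q.coeff_eq_zero_of_natDegree_lt (by omega)
      simp [this]
  · intro x
    have hterm : (fun n : ℕ => (n.factorial : ℝ) * q.coeff n / (n.factorial : ℝ) * x ^ n)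
        = fun n : ℕ => q.coeff n * x ^ n := by
      funext n
      have h0 : (n.factorial : ℝ) ≠ 0 := Nat.cast_ne_zero.2 n.factorial_ne_zero
      field_simp
    rw [hterm]
    have hz : ∀ n ∉ Finset.range (q.natDegree + 1), q.coeff n * x ^ n = 0 := by
      intro n hn
      have hn' : q.natDegree < n := by simp [Finset.mem_range] at hn; omega
      have : q.coeff n = 0 := q.coeff_eq_zero_of_natDegree_lt hn'
      simp [this]
    have : HasSum (fun n : ℕ => q.coeff n * x ^ n)
        (∑ n ∈ Finset.range (q.natDegree + 1), q.coeff n * x ^ n) :=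
      hasSum_sum_of_ne_finset_zero (s := Finset.range (q.natDegree + 1))
      (f := fun n : ℕ => q.coeff n * x ^ n) hz
    rwa [← q.eval_eq_sum_range] at this

/-- Approximation lemma: any smooth `f` is `ε`-close in `ρ_p` to some element of some `EFsp`. -/
lemma approx (γ : ℝ) (hγ : 0 < γ) (p : ℝ≥0∞) (f : ℝ → ℝ)
    (hf : ContDiff ℝ (⊤ : ℕ∞) f) {ε : ℝ} (hε : 0 < ε) :
    ∃ S : Finset ℝ, ∃ g ∈ EFsp S, rho 0 γ p f g < ε := by
  set K : ℝ≥0∞ := (ENNReal.ofReal γ) ^ p.toReal⁻¹ with hK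
  have hKt : K ≠ ⊤ := by
    apply ENNReal.rpow_ne_top_of_nonneg (by positivity)
    exact ENNReal.ofReal_ne_top
  set δ : ℝ := ε / (K.toReal + 1) with hδ
  have hKpos : 0 < K.toReal + 1 := by positivity
  have hδpos : 0 < δ := div_pos hε hKpos
  obtain ⟨q, hq⟩ := exists_polynomial_near_of_continuousOn 0 γ f
    (hf.continuous.continuousOn) δ hδpos
  refine ⟨_, _, poly_mem_EFsp q, ?_⟩
  have hb : ∀ x ∈ Icc (0:ℝ) γ, |f x - q.eval x| ≤ δ := by
    intro x hx
    have := hq x hx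
    rw [abs_sub_comm]
    linarith [abs_nonneg (Polynomial.eval x q - f x)]
  have h := eLpNorm_le_of_ae_bound (μ := volume.restrict (Icc (0:ℝ) γ)) (p := p)
    (f := fun x => f x - q.eval x) (C := δ)
    ((ae_restrict_iff' measurableSet_Icc).2 (Filter.Eventually.of_forall fun x hx => by
      simpa [Real.norm_eq_abs] using hb x hx))
  have h2 : eLpNorm (fun x => f x - q.eval x) p (volume.restrict (Icc 0 γ))
      ≤ K * ENNReal.ofReal δ := by
    simpa [hK, Measure.restrict_apply, Real.volume_Icc, hγ.le] using h
  have hfin : K * ENNReal.ofReal δ ≠ ⊤ := ENNReal.mul_ne_top hKt ENNReal.ofReal_ne_top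
  have h3 : rho 0 γ p f (fun x => q.eval x) ≤ (K * ENNReal.ofReal δ).toReal :=
    ENNReal.toReal_mono hfin h2
  have h4 : (K * ENNReal.ofReal δ).toReal = K.toReal * δ := by
    rw [ENNReal.toReal_mul, ENNReal.toReal_ofReal hδpos.le]
  calc rho 0 γ p f (fun x => q.eval x) ≤ K.toReal * δ := by rw [← h4]; exact h3
    _ < ε := by
        rw [hδ]
        have : K.toReal / (K.toReal + 1) < 1 :=
          (div_lt_one hKpos).2 (by linarith)
        calc K.toReal * (ε / (K.toReal + 1)) = (K.toReal / (K.toReal + 1)) * ε := by ring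
          _ < 1 * ε := by exact mul_lt_mul_of_pos_right this hε
          _ = ε := one_mul ε

/-- Fix `γ > 0` and `1 ≤ p ≤ ∞`. Every smooth `f` on `[0, γ]` admits an
approximating filtration `{E_{F(n)}}`: there are finite sets `F(n) ⊂ ℝ` with
`2 ≤ #F(n)`, with `E_{F(n)} ⊆ E_{F(n+1)}`, and such that `f` lies in the `ρ_p`-closure
of `⋃ₙ E_{F(n)}` (i.e. for every `ε > 0` some `g` in some `E_{F(n)}` has
`ρ_p(f, g) < ε`). -/
theorem stmt5 (γ : ℝ) (hγ : 0 < γ) (p : ℝ≥0∞) (hp : 1 ≤ p) :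
    ∀ f : ℝ → ℝ, ContDiff ℝ (⊤ : ℕ∞) f →
      ∃ F : ℕ → Finset ℝ,
        (∀ n : ℕ, 2 ≤ (F n).card) ∧
        (∀ n : ℕ, EFsp (F n) ⊆ EFsp (F (n + 1))) ∧
        (∀ ε > (0 : ℝ), ∃ n : ℕ, ∃ g ∈ EFsp (F n), rho 0 γ p f g < ε) := by
  intro f hf
  -- for each k, choose a finite set and approximant within 1/(k+1)
  have hchoice : ∀ k : ℕ, ∃ S : Finset ℝ, ∃ g ∈ EFsp S, rho 0 γ p f g < 1 / (k + 1) :=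
    fun k => approx γ hγ p f hf (by positivity)
  choose S g hg hr using hchoice
  refine ⟨fun n => ({0, 1} : Finset ℝ) ∪ (Finset.range (n + 1)).biUnion S, ?_, ?_, ?_⟩
  · intro n
    calc (2:ℕ) = ({0,1} : Finset ℝ).card := by norm_num
      _ ≤ _ := Finset.card_le_card Finset.subset_union_left
  · intro n
    apply EFsp_mono
    apply Finset.union_subset_union_right
    apply Finset.biUnion_subset_biUnion_of_subset_left
    exact Finset.range_subset_range.2 (by omega)
  · intro ε hε
    obtain ⟨k, hk⟩ := exists_nat_one_div_lt hε
    refine ⟨k, g k, ?_, lt_trans (hr k) (by exact_mod_cast hk)⟩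
    apply EFsp_mono ?_ (hg k)
    exact (Finset.subset_biUnion_of_mem S (Finset.mem_range.2 (Nat.lt_succ_self k))).trans
      Finset.subset_union_right
end

section
/- Fix γ > 0 and 1 ≤ p ≤ ∞. The set of periodic points of the differential operator d/dx, i.e. {g ∈ C^∞([0,γ]) : there exists m ≥ 1 with d^m g/dx^m = g}, is dense in (C^∞([0,γ]), ρ_p). -/
open MeasureTheory Set Filter
open scoped ENNReal Topology

section Aux

open NormedSpace Matrix
open Fin.NatCast
attribute [local instance] Matrix.linftyOpNormedRing Matrix.linftyOpNormedAlgebra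

noncomputable def Amat (m : ℕ) : Matrix (Fin (m+1)) (Fin (m+1)) ℝ :=
  Matrix.of fun i j => if j = i + 1 then 1 else 0

noncomputable def gfn (m : ℕ) (c : Fin (m+1) → ℝ) (x : ℝ) : ℝ :=
  (exp (x • Amat m) *ᵥ c) 0

lemma Amat_mulVec (m : ℕ) (c : Fin (m+1) → ℝ) (i : Fin (m+1)) :
    (Amat m *ᵥ c) i = c (i+1) := by
  simp [Amat, Matrix.mulVec, dotProduct]

lemma Amat_pow_mulVec (m n : ℕ) (c : Fin (m+1) → ℝ) (i : Fin (m+1)) :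
    ((Amat m)^n *ᵥ c) i = c (i + (n : Fin (m+1))) := by
  induction n generalizing c i with
  | zero => simp
  | succ n ih =>
      rw [pow_succ, ← Matrix.mulVec_mulVec, ih, Amat_mulVec]
      congr 1
      push_cast
      abel

/-- the evaluation map as a continuous linear map -/
noncomputable def phiMap (m : ℕ) (c : Fin (m+1) → ℝ) :
    Matrix (Fin (m+1)) (Fin (m+1)) ℝ →L[ℝ] ℝ :=
  LinearMap.toContinuousLinearMap
    { toFun := fun M => (M *ᵥ c) 0
      map_add' := by intros; simp [Matrix.add_mulVec]
      map_smul' := by intros; simp [Matrix.smul_mulVec] }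

lemma hasDerivAt_gfn (m : ℕ) (c : Fin (m+1) → ℝ) (x : ℝ) :
    HasDerivAt (gfn m c) (gfn m (Amat m *ᵥ c) x) x := by
  have h := hasDerivAt_exp_smul_const (𝕂 := ℝ) (Amat m) x
  have h2 := (phiMap m c).hasFDerivAt.comp_hasDerivAt x h
  have : gfn m c = fun y => phiMap m c (exp (y • Amat m)) := rfl
  rw [this]
  refine h2.congr_deriv (Eq.symm ?_)
  show gfn m (Amat m *ᵥ c) x = ((exp (x • Amat m) * Amat m) *ᵥ c) 0
  rw [← Matrix.mulVec_mulVec]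
  rfl

lemma deriv_gfn (m : ℕ) (c : Fin (m+1) → ℝ) :
    deriv (gfn m c) = gfn m (Amat m *ᵥ c) :=
  funext fun x => (hasDerivAt_gfn m c x).deriv

lemma contDiff_gfn (m : ℕ) (c : Fin (m+1) → ℝ) : ContDiff ℝ (⊤ : ℕ∞) (gfn m c) := by
  suffices h : ∀ (n : ℕ) (c : Fin (m+1) → ℝ), ContDiff ℝ (n : WithTop ℕ∞) (gfn m c) by
    rw [contDiff_infty]
    intro n
    exact h n c
  intro n
  induction n with
  | zero =>
      exact fun c => contDiff_zero.2 (continuous_iff_continuousAt.2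
        fun x => (hasDerivAt_gfn m c x).continuousAt)
  | succ n ih =>
      intro c
      have : ((n+1 : ℕ) : WithTop ℕ∞) = (n : WithTop ℕ∞) + 1 := by push_cast; ring
      rw [this, contDiff_succ_iff_deriv]
      refine ⟨fun x => (hasDerivAt_gfn m c x).differentiableAt, by simp, ?_⟩
      rw [deriv_gfn]; exact ih _

lemma iter_deriv_gfn (m k : ℕ) (c : Fin (m+1) → ℝ) :
    deriv^[k] (gfn m c) = gfn m ((Amat m)^k *ᵥ c) := by
  induction k generalizing c with
  | zero => simp
  | succ k ih =>
      rw [Function.iterate_succ_apply, deriv_gfn, ih]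
      have hv : Amat m ^ k *ᵥ (Amat m *ᵥ c) = Amat m ^ (k+1) *ᵥ c := by
        funext i
        rw [Amat_pow_mulVec, Amat_mulVec, Amat_pow_mulVec]
        congr 1
        push_cast
        abel
      rw [hv]

lemma periodic_gfn (m : ℕ) (c : Fin (m+1) → ℝ) :
    deriv^[m+1] (gfn m c) = gfn m c := by
  rw [iter_deriv_gfn]
  have hv : Amat m ^ (m+1) *ᵥ c = c := by
    funext i
    rw [Amat_pow_mulVec]
    norm_num
  rw [hv]

lemma hasSum_gfn (m : ℕ) (c : Fin (m+1) → ℝ) (x : ℝ) :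
    HasSum (fun n : ℕ => x^n / n.factorial * c (n : Fin (m+1))) (gfn m c x) := by
  have h := exp_series_hasSum_exp' (𝕂 := ℝ) (x • Amat m)
  have h2 := h.mapL (phiMap m c)
  convert h2 using 2 with n
  show x^n / n.factorial * c (n : Fin (m+1))
    = phiMap m c ((n.factorial⁻¹ : ℝ) • (x • Amat m)^n)
  rw [smul_pow, _root_.map_smul, _root_.map_smul]
  show x^n / n.factorial * c (n : Fin (m+1))
    = (n.factorial:ℝ)⁻¹ • x ^ n • ((Amat m ^ n *ᵥ c) 0)
  rw [Amat_pow_mulVec]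
  simp [div_eq_mul_inv, smul_eq_mul]
  ring
  rfl

lemma gfn_near_poly (γ : ℝ) (hγ : 0 < γ) (P : Polynomial ℝ) (δ : ℝ) (hδ : 0 < δ) :
    ∃ m : ℕ, ∀ x ∈ Set.Icc (0:ℝ) γ,
      |gfn m (fun j => ((j:ℕ).factorial : ℝ) * P.coeff (j:ℕ)) x - P.eval x| ≤ δ := by
  classical
  set C : ℝ := ∑ j ∈ Finset.range (P.natDegree + 1), ((j:ℕ).factorial : ℝ) * |P.coeff j| with hC
  have hC0 : 0 ≤ C := Finset.sum_nonneg fun j _ => by positivity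
  have hCk : ∀ k : ℕ, ((k).factorial : ℝ) * |P.coeff k| ≤ C := by
    intro k
    by_cases hk : k ≤ P.natDegree
    · exact Finset.single_le_sum (f := fun j => ((j).factorial : ℝ) * |P.coeff j|)
        (fun j _ => by positivity) (Finset.mem_range.2 (Nat.lt_succ_of_le hk))
    · rw [Polynomial.coeff_eq_zero_of_natDegree_lt (lt_of_not_ge hk)]
      simpa using hC0
  have hsum : Summable (fun n : ℕ => γ ^ n / n.factorial) := Real.summable_pow_div_factorial γ
  have htail : Filter.Tendsto (fun k => ∑' n : ℕ, γ ^ (n + k) / (n + k).factorial)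
      Filter.atTop (nhds 0) :=
    tendsto_sum_nat_add (fun n => γ ^ n / n.factorial)
  obtain ⟨m₀, hm₀⟩ := Filter.eventually_atTop.1
    ((tendsto_order.1 htail).2 (δ / (C + 1)) (by positivity))
  set m : ℕ := max m₀ P.natDegree with hm
  have hdeg : P.natDegree ≤ m := le_max_right _ _
  refine ⟨m, fun x hx => ?_⟩
  set c : Fin (m+1) → ℝ := fun j => ((j:ℕ).factorial : ℝ) * P.coeff (j:ℕ) with hc
  have h1 : HasSum (fun n : ℕ => x^n / n.factorial * c (n : Fin (m+1))) (gfn m c x) :=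
    hasSum_gfn m c x
  -- partial sum equals P.eval x
  have hpart : ∑ n ∈ Finset.range (m+1), x^n / n.factorial * c (n : Fin (m+1)) = P.eval x := by
    rw [Polynomial.eval_eq_sum_range' (Nat.lt_succ_of_le hdeg)]
    refine Finset.sum_congr rfl fun n hn => ?_
    have hnm : n < m + 1 := Finset.mem_range.1 hn
    have : ((n : Fin (m+1)) : ℕ) = n := Fin.val_cast_of_lt hnm
    rw [hc]
    simp only [this]
    have hfac : ((n.factorial : ℝ)) ≠ 0 := Nat.cast_ne_zero.2 n.factorial_ne_zero
    field_simp
  -- tail bound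
  have hbound : ∀ n : ℕ, |x^n / n.factorial * c (n : Fin (m+1))| ≤ C * (γ^n / n.factorial) := by
    intro n
    have hx0 : 0 ≤ x := hx.1
    have hxγ : x ≤ γ := hx.2
    have hxn : |x^n| ≤ γ^n := by
      rw [abs_of_nonneg (pow_nonneg hx0 n)]
      exact pow_le_pow_left₀ hx0 hxγ n
    have h2 : |c (n : Fin (m+1))| ≤ C := by
      rw [hc]
      simp only
      rw [abs_mul, abs_of_nonneg (by positivity : (0:ℝ) ≤ (((n : Fin (m+1)) : ℕ).factorial : ℝ))]
      exact hCk _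
    have heq : |x^n / n.factorial * c (n : Fin (m+1))|
        = |x^n| / n.factorial * |c (n : Fin (m+1))| := by
      rw [abs_mul, abs_div, abs_of_nonneg (by positivity : (0:ℝ) ≤ (n.factorial:ℝ))]
    rw [heq]
    calc |x^n| / n.factorial * |c (n : Fin (m+1))|
        ≤ γ^n / n.factorial * C := by
          apply mul_le_mul _ h2 (abs_nonneg _) (by positivity)
          gcongr
      _ = C * (γ^n / n.factorial) := by ring
  set t : ℕ → ℝ := fun n => x^n / n.factorial * c (n : Fin (m+1)) with ht
  have hsum2 : Summable t := h1.summable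
  have hsumtail : Summable (fun i => t (i + (m+1))) := (summable_nat_add_iff (m+1)).2 hsum2
  have hsumbound : Summable (fun i : ℕ => C * (γ^(i+(m+1)) / (i+(m+1)).factorial)) :=
    ((summable_nat_add_iff (m+1)).2 hsum).mul_left C
  have hsumabs : Summable (fun i => |t (i + (m+1))|) :=
    hsumbound.of_nonneg_of_le (fun i => abs_nonneg _) (fun i => hbound (i+(m+1)))
  have hsplit := Summable.sum_add_tsum_nat_add (m+1) hsum2
  have hdiff : gfn m c x - P.eval x = ∑' i, t (i + (m+1)) := by
    rw [← h1.tsum_eq, ← hsplit, hpart]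
    ring
  rw [hdiff]
  have step1 : |∑' i, t (i + (m+1))| ≤ ∑' i, |t (i + (m+1))| := by
    simpa using norm_tsum_le_tsum_norm (f := fun i => t (i + (m+1))) (by simpa using hsumabs)
  have step2 : ∑' i, |t (i + (m+1))| ≤ ∑' i : ℕ, C * (γ^(i+(m+1)) / (i+(m+1)).factorial) :=
    Summable.tsum_le_tsum (fun i => hbound (i+(m+1))) hsumabs hsumbound
  have step3 : ∑' i : ℕ, C * (γ^(i+(m+1)) / (i+(m+1)).factorial)
      = C * ∑' i : ℕ, γ^(i+(m+1)) / (i+(m+1)).factorial := tsum_mul_left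
  have step4 : ∑' i : ℕ, γ^(i+(m+1)) / (i+(m+1)).factorial < δ / (C + 1) :=
    hm₀ (m+1) (le_trans (le_max_left _ _) (Nat.le_succ_of_le (le_refl m)))
  have step5 : 0 ≤ ∑' i : ℕ, γ^(i+(m+1)) / (i+(m+1)).factorial :=
    tsum_nonneg (fun i => by positivity)
  calc |∑' i, t (i + (m+1))| ≤ C * ∑' i : ℕ, γ^(i+(m+1)) / (i+(m+1)).factorial := by
        rw [← step3]; exact le_trans step1 step2
    _ ≤ C * (δ / (C+1)) := mul_le_mul_of_nonneg_left step4.le hC0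
    _ = (C / (C+1)) * δ := by ring
    _ ≤ 1 * δ := by
        apply mul_le_mul_of_nonneg_right _ hδ.le
        exact div_le_one_of_le₀ (by linarith) (by positivity)
    _ = δ := one_mul δ

end Aux

/-- Fix `γ > 0` and `1 ≤ p ≤ ∞`. The set of periodic points of `d/dx`
in `C^∞([0, γ])`, i.e. smooth functions `g` with `dᵐg/dxᵐ = g` on `[0, γ]` for some
`m ≥ 1`, is dense in `(C^∞([0, γ]), ρ_p)`. -/
theorem stmt7 (γ : ℝ) (hγ : 0 < γ) (p : ℝ≥0∞) (hp : 1 ≤ p) :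
    ∀ f : ℝ → ℝ, ContDiff ℝ (⊤ : ℕ∞) f → ∀ ε > (0 : ℝ),
      ∃ g : ℝ → ℝ, ContDiff ℝ (⊤ : ℕ∞) g ∧
        (∃ m : ℕ, 1 ≤ m ∧ Set.EqOn (deriv^[m] g) g (Icc 0 γ)) ∧
        rho 0 γ p f g < ε := by
  intro f hf ε hε
  set Kbig : ℝ≥0∞ := (volume (Icc (0:ℝ) γ)) ^ p.toReal⁻¹ with hKbig
  have hKbig_ne : Kbig ≠ ∞ := by
    apply ENNReal.rpow_ne_top_of_nonneg (by positivity)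
    simp [Real.volume_Icc]
  set K : ℝ := Kbig.toReal with hK
  have hK0 : 0 ≤ K := ENNReal.toReal_nonneg
  set δ : ℝ := ε / (2 * (K + 1)) with hδdef
  have hδ : 0 < δ := by positivity
  obtain ⟨P, hP⟩ := exists_polynomial_near_of_continuousOn 0 γ f
    hf.continuous.continuousOn δ hδ
  obtain ⟨m, hm⟩ := gfn_near_poly γ hγ P δ hδ
  set c : Fin (m+1) → ℝ := fun j => ((j:ℕ).factorial : ℝ) * P.coeff (j:ℕ) with hc
  refine ⟨gfn m c, contDiff_gfn m c, ⟨m+1, Nat.le_add_left 1 m,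
    fun x _ => congrFun (periodic_gfn m c) x⟩, ?_⟩
  -- pointwise bound
  have hpt : ∀ x ∈ Icc (0:ℝ) γ, ‖f x - gfn m c x‖ ≤ 2 * δ := by
    intro x hx
    have h1 := hP x hx
    have h2 := hm x hx
    rw [Real.norm_eq_abs]
    calc |f x - gfn m c x| = |(gfn m c x - P.eval x) + (P.eval x - f x)| := by ring_nf; rw [abs_sub_comm]; ring_nf
      _ ≤ |gfn m c x - P.eval x| + |P.eval x - f x| := abs_add_le _ _
      _ ≤ δ + δ := add_le_add h2 h1.le
      _ = 2 * δ := by ring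
  have hae : ∀ᵐ x ∂(volume.restrict (Icc (0:ℝ) γ)), ‖f x - gfn m c x‖ ≤ 2 * δ :=
    (ae_restrict_iff' measurableSet_Icc).2 (Filter.Eventually.of_forall hpt)
  have hle := eLpNorm_le_of_ae_bound (p := p) hae
  rw [Measure.restrict_apply_univ] at hle
  have hRHS_ne : Kbig * ENNReal.ofReal (2 * δ) ≠ ∞ :=
    ENNReal.mul_ne_top hKbig_ne ENNReal.ofReal_ne_top
  have h3 : rho 0 γ p f (gfn m c) ≤ (Kbig * ENNReal.ofReal (2 * δ)).toReal :=
    ENNReal.toReal_mono hRHS_ne hle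
  have h4 : (Kbig * ENNReal.ofReal (2 * δ)).toReal = K * (2 * δ) := by
    rw [ENNReal.toReal_mul, ENNReal.toReal_ofReal (by positivity)]
  calc rho 0 γ p f (gfn m c) ≤ K * (2 * δ) := by rw [← h4]; exact h3
    _ = (K / (K + 1)) * ε := by rw [hδdef]; field_simp
    _ < 1 * ε := by
        apply mul_lt_mul_of_pos_right _ hε
        rw [div_lt_one (by linarith)]
        linarith
    _ = ε := one_mul ε
end

section
/- Let a < b be real numbers and 1 ≤ p ≤ ∞. For every β > 0, every f ∈ C^∞([a,b]) and every ε > 0, there exist g ∈ C^∞([a,b]) with ρ_p(f,g) < ε and n ∈ ℕ such that ρ_p(d^n f/dx^n, d^n g/dx^n) > β. In particular, the system (C^∞([a,b]), d/dx) has sensitive dependence on initial conditions with arbitrarily large sensitivity constant. -/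
open MeasureTheory Set Filter
open scoped ENNReal Topology

lemma deriv_const_mul_exp_two (d : ℝ) :
    deriv (fun x => d * Real.exp (2 * x)) = fun x => (2 * d) * Real.exp (2 * x) := by
  funext x
  have h1 : HasDerivAt (fun x : ℝ => 2 * x) 2 x := by
    simpa using (hasDerivAt_id x).const_mul (2 : ℝ)
  have h2 : HasDerivAt (fun x : ℝ => Real.exp (2 * x)) (Real.exp (2 * x) * 2) x :=
    (Real.hasDerivAt_exp (2 * x)).comp x h1
  have h3 : HasDerivAt (fun x : ℝ => d * Real.exp (2 * x)) (d * (Real.exp (2 * x) * 2)) x :=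
    h2.const_mul d
  rw [h3.deriv]; ring

lemma smooth_exp_two (c : ℝ) : ContDiff ℝ (⊤ : ℕ∞) (fun x : ℝ => c * Real.exp (2 * x)) :=
  contDiff_const.mul (Real.contDiff_exp.comp (contDiff_const.mul contDiff_id))

lemma iter_deriv_add_exp (f : ℝ → ℝ) (hf : ContDiff ℝ (⊤ : ℕ∞) f) (c : ℝ) (n : ℕ) :
    deriv^[n] (fun x => f x + c * Real.exp (2 * x)) =
      fun x => deriv^[n] f x + (c * 2 ^ n) * Real.exp (2 * x) := by
  induction n with
  | zero => simp
  | succ n ih =>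
    rw [Function.iterate_succ_apply', ih]
    funext x
    have hfd : DifferentiableAt ℝ (deriv^[n] f) x :=
      (hf.iterate_deriv n).differentiable (by simp) x
    have hed : DifferentiableAt ℝ (fun x => (c * 2 ^ n) * Real.exp (2 * x)) x :=
      ((smooth_exp_two (c * 2 ^ n)).differentiable (by simp)) x
    rw [deriv_fun_add hfd hed, deriv_const_mul_exp_two (c * 2 ^ n),
      ← Function.iterate_succ_apply' deriv n f]
    ring

/-- Let `a < b` and `1 ≤ p ≤ ∞`. For every `β > 0`, every smooth `f` on
`[a, b]` and every `ε > 0`, there are a smooth `g` with `ρ_p(f, g) < ε` and an `n ∈ ℕ`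
with `ρ_p(dⁿf/dxⁿ, dⁿg/dxⁿ) > β`: the system `(C^∞([a, b]), d/dx)` has sensitive
dependence on initial conditions with arbitrarily large sensitivity constant. -/
theorem stmt9 (a b : ℝ) (hab : a < b) (p : ℝ≥0∞) (hp : 1 ≤ p) :
    ∀ β > (0 : ℝ), ∀ f : ℝ → ℝ, ContDiff ℝ (⊤ : ℕ∞) f → ∀ ε > (0 : ℝ),
      ∃ g : ℝ → ℝ, ContDiff ℝ (⊤ : ℕ∞) g ∧ ∃ n : ℕ,
        rho a b p f g < ε ∧ rho a b p (deriv^[n] f) (deriv^[n] g) > β := by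
  intro β hβ f hf ε hε
  set μ : Measure ℝ := volume.restrict (Icc a b) with hμdef
  have hμne : μ ≠ 0 := by
    intro h
    have : μ (Icc a b) = 0 := by rw [h]; simp
    rw [hμdef, Measure.restrict_apply measurableSet_Icc, inter_self,
      Real.volume_Icc] at this
    exact absurd this (by simp [ENNReal.ofReal_eq_zero]; linarith)
  set M : ℝ≥0∞ := μ Set.univ ^ (1 / ENNReal.toReal p) with hMdef
  have hμuniv : μ Set.univ = ENNReal.ofReal (b - a) := by
    rw [hμdef, Measure.restrict_apply_univ, Real.volume_Icc]
  have hMne_top : M ≠ ⊤ := by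
    rw [hMdef, hμuniv]
    exact ENNReal.rpow_ne_top_of_nonneg (by positivity) (by simp)
  have hMpos : 0 < M.toReal := by
    rw [hMdef, hμuniv]
    have h1 : (0:ℝ≥0∞) < ENNReal.ofReal (b - a) ^ (1 / ENNReal.toReal p) := by
      apply ENNReal.rpow_pos
      · simp [ENNReal.ofReal_pos]; linarith
      · simp
    exact ENNReal.toReal_pos h1.ne' (ENNReal.rpow_ne_top_of_nonneg (by positivity) ENNReal.ofReal_ne_top)
  have hpne : p ≠ 0 := by intro h; rw [h] at hp; exact absurd hp (by simp)
  -- choose c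
  set c : ℝ := ε / (2 * Real.exp (2 * b) * M.toReal) with hcdef
  have hc : 0 < c := by
    apply div_pos hε
    positivity
  -- the eLpNorm of the scaled difference
  have key : ∀ K : ℝ, 0 < K →
      eLpNorm (fun x => K * Real.exp (2 * x)) p μ ≤ ENNReal.ofReal (K * Real.exp (2 * b)) * M ∧
      ENNReal.ofReal (K * Real.exp (2 * a)) * M ≤
        eLpNorm (fun x => K * Real.exp (2 * x)) p μ := by
    intro K hK
    constructor
    · have h1 : ∀ᵐ x ∂μ, ‖K * Real.exp (2 * x)‖ ≤ ‖K * Real.exp (2 * b)‖ := by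
        filter_upwards [ae_restrict_mem measurableSet_Icc] with x hx
        rw [Real.norm_eq_abs, Real.norm_eq_abs, abs_of_pos (by positivity),
          abs_of_pos (by positivity)]
        exact mul_le_mul_of_nonneg_left
          (Real.exp_le_exp.2 (by linarith [hx.2])) hK.le
      calc eLpNorm (fun x => K * Real.exp (2 * x)) p μ
          ≤ eLpNorm (fun _ : ℝ => K * Real.exp (2 * b)) p μ := eLpNorm_mono_ae h1
        _ = ‖K * Real.exp (2 * b)‖₊ * M := eLpNorm_const _ hpne hμne
        _ = ENNReal.ofReal (K * Real.exp (2 * b)) * M := by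
            congr 1
            rw [← ENNReal.ofReal_coe_nnreal, coe_nnnorm, Real.norm_eq_abs,
              abs_of_pos (by positivity)]
    · have h1 : ∀ᵐ x ∂μ, ‖K * Real.exp (2 * a)‖ ≤ ‖K * Real.exp (2 * x)‖ := by
        filter_upwards [ae_restrict_mem measurableSet_Icc] with x hx
        rw [Real.norm_eq_abs, Real.norm_eq_abs, abs_of_pos (by positivity),
          abs_of_pos (by positivity)]
        exact mul_le_mul_of_nonneg_left
          (Real.exp_le_exp.2 (by linarith [hx.1])) hK.le
      calc ENNReal.ofReal (K * Real.exp (2 * a)) * M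
          = ‖K * Real.exp (2 * a)‖₊ * M := by
            congr 1
            rw [← ENNReal.ofReal_coe_nnreal, coe_nnnorm, Real.norm_eq_abs,
              abs_of_pos (by positivity)]
        _ = eLpNorm (fun _ : ℝ => K * Real.exp (2 * a)) p μ :=
            (eLpNorm_const (K * Real.exp (2 * a)) hpne hμne).symm
        _ ≤ eLpNorm (fun x => K * Real.exp (2 * x)) p μ := eLpNorm_mono_ae h1
  set g : ℝ → ℝ := fun x => f x + c * Real.exp (2 * x) with hgdef
  have hg : ContDiff ℝ (⊤ : ℕ∞) g := hf.add (smooth_exp_two c)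
  -- rho as eLpNorm of the exp term
  have hrho : ∀ n : ℕ, rho a b p (deriv^[n] f) (deriv^[n] g) =
      (eLpNorm (fun x => (c * 2 ^ n) * Real.exp (2 * x)) p μ).toReal := by
    intro n
    unfold rho
    congr 1
    rw [hgdef, iter_deriv_add_exp f hf c n]
    have : (fun x => deriv^[n] f x - (deriv^[n] f x + c * 2 ^ n * Real.exp (2 * x)))
        = -fun x => (c * 2 ^ n) * Real.exp (2 * x) := by
      funext x; simp only [Pi.neg_apply]; ring
    rw [this, eLpNorm_neg]
  -- bounds in real numbers
  have hbound : ∀ n : ℕ,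
      rho a b p (deriv^[n] f) (deriv^[n] g) ≤ (c * 2 ^ n) * Real.exp (2 * b) * M.toReal ∧
      (c * 2 ^ n) * Real.exp (2 * a) * M.toReal ≤ rho a b p (deriv^[n] f) (deriv^[n] g) := by
    intro n
    have hK : (0:ℝ) < c * 2 ^ n := by positivity
    obtain ⟨hub, hlb⟩ := key (c * 2 ^ n) hK
    have hub_top : eLpNorm (fun x => (c * 2 ^ n) * Real.exp (2 * x)) p μ ≠ ⊤ :=
      ne_top_of_le_ne_top (ENNReal.mul_ne_top ENNReal.ofReal_ne_top hMne_top) hub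
    rw [hrho n]
    constructor
    · calc (eLpNorm (fun x => (c * 2 ^ n) * Real.exp (2 * x)) p μ).toReal
          ≤ (ENNReal.ofReal ((c * 2 ^ n) * Real.exp (2 * b)) * M).toReal :=
            ENNReal.toReal_mono (ENNReal.mul_ne_top ENNReal.ofReal_ne_top hMne_top) hub
        _ = (c * 2 ^ n) * Real.exp (2 * b) * M.toReal := by
            rw [ENNReal.toReal_mul, ENNReal.toReal_ofReal (by positivity)]
    · calc (c * 2 ^ n) * Real.exp (2 * a) * M.toReal
          = (ENNReal.ofReal ((c * 2 ^ n) * Real.exp (2 * a)) * M).toReal := by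
            rw [ENNReal.toReal_mul, ENNReal.toReal_ofReal (by positivity)]
        _ ≤ (eLpNorm (fun x => (c * 2 ^ n) * Real.exp (2 * x)) p μ).toReal :=
            ENNReal.toReal_mono hub_top hlb
  -- pick n large
  obtain ⟨n, hn⟩ := pow_unbounded_of_one_lt (β / (c * Real.exp (2 * a) * M.toReal))
    (by norm_num : (1:ℝ) < 2)
  refine ⟨g, hg, n, ?_, ?_⟩
  · have h0 := (hbound 0).1
    have : rho a b p f g = rho a b p (deriv^[0] f) (deriv^[0] g) := rfl
    rw [this]
    calc rho a b p (deriv^[0] f) (deriv^[0] g)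
        ≤ (c * 2 ^ 0) * Real.exp (2 * b) * M.toReal := h0
      _ = c * Real.exp (2 * b) * M.toReal := by ring
      _ = ε / 2 := by
          rw [hcdef]
          field_simp
      _ < ε := by linarith
  · have h1 := (hbound n).2
    have h2 : β < (c * 2 ^ n) * Real.exp (2 * a) * M.toReal := by
      have hpos : (0:ℝ) < c * Real.exp (2 * a) * M.toReal := by positivity
      have := (div_lt_iff₀ hpos).1 hn
      calc β < 2 ^ n * (c * Real.exp (2 * a) * M.toReal) := this
        _ = (c * 2 ^ n) * Real.exp (2 * a) * M.toReal := by ring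
    linarith
end

section
/- Fix γ > 0 and 1 ≤ p ≤ ∞. On the set E, the topology induced by the metric ρ_p coincides with the topology induced by the metric d_E. In particular, all the metrics ρ_p for 1 ≤ p ≤ ∞ induce the same topology on E. -/
open MeasureTheory Set Filter
open scoped ENNReal Topology

/-- The metric `d_E` on `E`, expressed via the coefficient sequences:
`d_E(f, g) = Σₙ |aₙ − bₙ|/(n+1)!`. -/
noncomputable def dE (a b : ℕ → ℝ) : ℝ :=
  ∑' n : ℕ, |a n - b n| / (Nat.factorial (n + 1) : ℝ)

lemma summable_aux {c : ℕ → ℝ} (hc : ∀ n, |c n| ≤ 1) (x : ℝ) :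
    Summable fun n => c n / (Nat.factorial n : ℝ) * x ^ n := by
  apply Summable.of_norm_bounded (Real.summable_pow_div_factorial |x|)
  intro n
  have h0 : (0:ℝ) < (Nat.factorial n : ℝ) := by positivity
  rw [norm_mul, norm_div, norm_pow, Real.norm_eq_abs, Real.norm_eq_abs, Real.norm_eq_abs,
    abs_of_pos h0]
  calc |c n| / (Nat.factorial n : ℝ) * |x| ^ n ≤ 1 / (Nat.factorial n : ℝ) * |x| ^ n := by
        gcongr; exact hc n
    _ = |x| ^ n / (Nat.factorial n : ℝ) := by ring

lemma binary_abs {a : ℕ → ℝ} (ha : ∀ n, a n = 0 ∨ a n = 1) (n : ℕ) : |a n| ≤ 1 := by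
  rcases ha n with h | h <;> simp [h]

lemma binary_sub_abs {a b : ℕ → ℝ} (ha : ∀ n, a n = 0 ∨ a n = 1)
    (hb : ∀ n, b n = 0 ∨ b n = 1) (n : ℕ) : |a n - b n| ≤ 1 := by
  rcases ha n with h | h <;> rcases hb n with h' | h' <;> simp [h, h']

lemma binary_sub_abs_eq {a b : ℕ → ℝ} (ha : ∀ n, a n = 0 ∨ a n = 1)
    (hb : ∀ n, b n = 0 ∨ b n = 1) {n : ℕ} (hne : a n ≠ b n) : |a n - b n| = 1 := by
  rcases ha n with h | h <;> rcases hb n with h' | h' <;> simp [h, h'] at hne ⊢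

lemma fseq_sub {a b : ℕ → ℝ} (ha : ∀ n, a n = 0 ∨ a n = 1)
    (hb : ∀ n, b n = 0 ∨ b n = 1) (x : ℝ) :
    (fun y : ℝ => (∑' n : ℕ, a n / (Nat.factorial n : ℝ) * y ^ n) -
      ∑' n : ℕ, b n / (Nat.factorial n : ℝ) * y ^ n) x
      = ∑' n : ℕ, (a n - b n) / (Nat.factorial n : ℝ) * x ^ n := by
  simp only
  rw [← Summable.tsum_sub (summable_aux (binary_abs ha) x) (summable_aux (binary_abs hb) x)]
  congr 1; ext n; ring

lemma summable_invfact : Summable (fun n : ℕ => (1:ℝ) / (Nat.factorial n : ℝ)) := by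
  simpa using Real.summable_pow_div_factorial 1

lemma summable_invfact_succ : Summable (fun n : ℕ => (1:ℝ) / (Nat.factorial (n+1) : ℝ)) :=
  (summable_nat_add_iff 1).mpr summable_invfact

lemma summable_dE_terms {c : ℕ → ℝ} (hc : ∀ n, |c n| ≤ 1) :
    Summable fun n => |c n| / (Nat.factorial (n+1) : ℝ) := by
  apply Summable.of_nonneg_of_le (fun n => by positivity) _ summable_invfact_succ
  intro n
  gcongr
  exact hc n


lemma dE_le_tail {a b : ℕ → ℝ} (ha : ∀ n, a n = 0 ∨ a n = 1)
    (hb : ∀ n, b n = 0 ∨ b n = 1) {N : ℕ} (hab : ∀ n < N, a n = b n) :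
    dE a b ≤ ∑' n : ℕ, (1:ℝ) / (Nat.factorial (n + N + 1) : ℝ) := by
  have hsum := summable_dE_terms (binary_sub_abs ha hb)
  have key := Summable.sum_add_tsum_nat_add (f := fun n => |a n - b n| / (Nat.factorial (n+1) : ℝ)) N hsum
  rw [dE, ← key]
  have h0 : (∑ i ∈ Finset.range N, |a i - b i| / (Nat.factorial (i+1) : ℝ)) = 0 := by
    apply Finset.sum_eq_zero
    intro i hi
    rw [hab i (Finset.mem_range.mp hi), sub_self, abs_zero, zero_div]
  rw [h0, zero_add]
  have s1 : Summable fun n : ℕ => |a (n+N) - b (n+N)| / (Nat.factorial (n+N+1) : ℝ) :=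
    (summable_nat_add_iff (f := fun n => |a n - b n| / (Nat.factorial (n+1) : ℝ)) N).mpr hsum
  have s2 : Summable fun n : ℕ => (1:ℝ) / (Nat.factorial (n+N+1) : ℝ) :=
    (summable_nat_add_iff (f := fun n => (1:ℝ) / (Nat.factorial (n+1) : ℝ)) N).mpr
      summable_invfact_succ
  refine Summable.tsum_le_tsum (fun n => ?_) s1 s2
  gcongr
  exact binary_sub_abs ha hb _

lemma one_div_fact_le_dE {a b : ℕ → ℝ} (ha : ∀ n, a n = 0 ∨ a n = 1)
    (hb : ∀ n, b n = 0 ∨ b n = 1) {N : ℕ} (hne : a N ≠ b N) :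
    (1:ℝ) / (Nat.factorial (N + 1) : ℝ) ≤ dE a b := by
  have hsum := summable_dE_terms (binary_sub_abs ha hb)
  have := Summable.le_tsum hsum N (fun j _ => by positivity)
  rwa [binary_sub_abs_eq ha hb hne] at this

lemma tail_tendsto_zero : Tendsto (fun N : ℕ => ∑' n : ℕ, (1:ℝ) / (Nat.factorial (n + N + 1) : ℝ))
    atTop (𝓝 0) :=
  tendsto_sum_nat_add (fun n => (1:ℝ) / (Nat.factorial (n + 1) : ℝ))

lemma gamma_tail_tendsto_zero (γ : ℝ) :
    Tendsto (fun N : ℕ => ∑' n : ℕ, γ ^ (n + N) / (Nat.factorial (n + N) : ℝ))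
    atTop (𝓝 0) :=
  tendsto_sum_nat_add (fun n => γ ^ n / (Nat.factorial n : ℝ))

lemma sup_bound {γ : ℝ} (hγ : 0 < γ) {a b : ℕ → ℝ} (ha : ∀ n, a n = 0 ∨ a n = 1)
    (hb : ∀ n, b n = 0 ∨ b n = 1) {N : ℕ} (hab : ∀ n < N, a n = b n)
    {x : ℝ} (hx : x ∈ Icc 0 γ) :
    |fseq a x - fseq b x| ≤ ∑' n : ℕ, γ ^ (n + N) / (Nat.factorial (n + N) : ℝ) := by
  have habs : ∀ n, |a n - b n| ≤ 1 := binary_sub_abs ha hb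
  have hxg : |x| ≤ γ := by
    rw [abs_of_nonneg hx.1]; exact hx.2
  have hEq : fseq a x - fseq b x = ∑' n : ℕ, (a n - b n) / (Nat.factorial n : ℝ) * x ^ n :=
    fseq_sub ha hb x
  rw [hEq]
  have hsum : Summable fun n : ℕ => (a n - b n) / (Nat.factorial n : ℝ) * x ^ n :=
    summable_aux habs x
  have key := Summable.sum_add_tsum_nat_add
    (f := fun n => (a n - b n) / (Nat.factorial n : ℝ) * x ^ n) N hsum
  have h0 : (∑ i ∈ Finset.range N, (a i - b i) / (Nat.factorial i : ℝ) * x ^ i) = 0 := by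
    apply Finset.sum_eq_zero
    intro i hi
    rw [hab i (Finset.mem_range.mp hi), sub_self, zero_div, zero_mul]
  rw [← key, h0, zero_add]
  have s2 : Summable fun n : ℕ => γ ^ (n + N) / (Nat.factorial (n + N) : ℝ) :=
    (summable_nat_add_iff (f := fun n => γ ^ n / (Nat.factorial n : ℝ)) N).mpr
      (Real.summable_pow_div_factorial γ)
  have s1 : Summable fun n : ℕ =>
      ‖(a (n+N) - b (n+N)) / (Nat.factorial (n+N) : ℝ) * x ^ (n+N)‖ := by
    apply Summable.of_nonneg_of_le (fun n => norm_nonneg _) _ s2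
    intro n
    have h0 : (0:ℝ) < (Nat.factorial (n+N) : ℝ) := by positivity
    rw [norm_mul, norm_div, norm_pow, Real.norm_eq_abs, Real.norm_eq_abs, Real.norm_eq_abs,
      abs_of_pos h0]
    calc |a (n+N) - b (n+N)| / (Nat.factorial (n+N) : ℝ) * |x| ^ (n+N)
        ≤ 1 / (Nat.factorial (n+N) : ℝ) * γ ^ (n+N) := by
          gcongr
          exact habs _
      _ = γ ^ (n+N) / (Nat.factorial (n+N) : ℝ) := by ring
  calc |∑' n : ℕ, (a (n+N) - b (n+N)) / (Nat.factorial (n+N) : ℝ) * x ^ (n+N)|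
      ≤ ∑' n : ℕ, ‖(a (n+N) - b (n+N)) / (Nat.factorial (n+N) : ℝ) * x ^ (n+N)‖ :=
        norm_tsum_le_tsum_norm s1
    _ ≤ ∑' n : ℕ, γ ^ (n + N) / (Nat.factorial (n + N) : ℝ) := by
        refine Summable.tsum_le_tsum (fun n => ?_) s1 s2
        have h0 : (0:ℝ) < (Nat.factorial (n+N) : ℝ) := by positivity
        rw [norm_mul, norm_div, norm_pow, Real.norm_eq_abs, Real.norm_eq_abs, Real.norm_eq_abs,
          abs_of_pos h0]
        calc |a (n+N) - b (n+N)| / (Nat.factorial (n+N) : ℝ) * |x| ^ (n+N)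
            ≤ 1 / (Nat.factorial (n+N) : ℝ) * γ ^ (n+N) := by
              gcongr
              exact habs _
          _ = γ ^ (n+N) / (Nat.factorial (n+N) : ℝ) := by ring

lemma lower_bound {a b : ℕ → ℝ} (ha : ∀ n, a n = 0 ∨ a n = 1)
    (hb : ∀ n, b n = 0 ∨ b n = 1) {N : ℕ} (hab : ∀ n < N, a n = b n) (hne : a N ≠ b N)
    {x : ℝ} (hx0 : 0 ≤ x) (hx4 : x ≤ 4⁻¹) :
    x ^ N / (2 * (Nat.factorial N : ℝ)) ≤ |fseq a x - fseq b x| := by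
  have habs : ∀ n, |a n - b n| ≤ 1 := binary_sub_abs ha hb
  have hx1 : x ≤ 1 := le_trans hx4 (by norm_num)
  have hF : (0:ℝ) < (Nat.factorial N : ℝ) := by positivity
  have hEq : fseq a x - fseq b x = ∑' n : ℕ, (a n - b n) / (Nat.factorial n : ℝ) * x ^ n :=
    fseq_sub ha hb x
  rw [hEq]
  have hsum : Summable fun n : ℕ => (a n - b n) / (Nat.factorial n : ℝ) * x ^ n :=
    summable_aux habs x
  have key := Summable.sum_add_tsum_nat_add
    (f := fun n => (a n - b n) / (Nat.factorial n : ℝ) * x ^ n) (N+1) hsum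
  set T : ℝ := ∑' n : ℕ, (a (n+(N+1)) - b (n+(N+1))) / (Nat.factorial (n+(N+1)) : ℝ) * x ^ (n+(N+1)) with hT
  have hhead : (∑ i ∈ Finset.range (N+1), (a i - b i) / (Nat.factorial i : ℝ) * x ^ i)
      = (a N - b N) / (Nat.factorial N : ℝ) * x ^ N := by
    apply Finset.sum_eq_single_of_mem N (Finset.self_mem_range_succ N)
    intro i hi hne'
    have : i < N := lt_of_le_of_ne (Nat.lt_succ_iff.mp (Finset.mem_range.mp hi)) hne'
    rw [hab i this, sub_self, zero_div, zero_mul]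
  have habshead : |(a N - b N) / (Nat.factorial N : ℝ) * x ^ N| = x ^ N / (Nat.factorial N : ℝ) := by
    rw [abs_mul, abs_div, binary_sub_abs_eq ha hb hne, abs_of_pos hF,
      abs_of_nonneg (pow_nonneg hx0 N)]
    ring
  -- bound on the tail
  have hgeo : Summable fun n : ℕ => x ^ (N+1) / (Nat.factorial N : ℝ) * (1/2) ^ n :=
    (summable_geometric_two).mul_left _
  have hterm : ∀ n : ℕ,
      ‖(a (n+(N+1)) - b (n+(N+1))) / (Nat.factorial (n+(N+1)) : ℝ) * x ^ (n+(N+1))‖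
        ≤ x ^ (N+1) / (Nat.factorial N : ℝ) * (1/2) ^ n := by
    intro n
    have h0 : (0:ℝ) < (Nat.factorial (n+(N+1)) : ℝ) := by positivity
    have hfle : (Nat.factorial N : ℝ) ≤ (Nat.factorial (n+(N+1)) : ℝ) := by
      exact_mod_cast Nat.factorial_le (by omega)
    rw [norm_mul, norm_div, norm_pow, Real.norm_eq_abs, Real.norm_eq_abs, Real.norm_eq_abs,
      abs_of_pos h0, abs_of_nonneg hx0]
    have hxp : x ^ (n+(N+1)) = x ^ (N+1) * x ^ n := by
      rw [← pow_add]; ring_nf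
    calc |a (n+(N+1)) - b (n+(N+1))| / (Nat.factorial (n+(N+1)) : ℝ) * x ^ (n+(N+1))
        ≤ 1 / (Nat.factorial N : ℝ) * x ^ (n+(N+1)) := by
          gcongr
          · exact habs _
      _ = x ^ (N+1) / (Nat.factorial N : ℝ) * x ^ n := by rw [hxp]; ring
      _ ≤ x ^ (N+1) / (Nat.factorial N : ℝ) * (1/2) ^ n := by
          gcongr
          linarith
  have hTsum : Summable fun n : ℕ =>
      ‖(a (n+(N+1)) - b (n+(N+1))) / (Nat.factorial (n+(N+1)) : ℝ) * x ^ (n+(N+1))‖ :=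
    Summable.of_nonneg_of_le (fun n => norm_nonneg _) hterm hgeo
  have hTbound : |T| ≤ 2 * x ^ (N+1) / (Nat.factorial N : ℝ) := by
    calc |T| ≤ ∑' n : ℕ,
        ‖(a (n+(N+1)) - b (n+(N+1))) / (Nat.factorial (n+(N+1)) : ℝ) * x ^ (n+(N+1))‖ :=
          norm_tsum_le_tsum_norm hTsum
      _ ≤ ∑' n : ℕ, x ^ (N+1) / (Nat.factorial N : ℝ) * (1/2) ^ n :=
          Summable.tsum_le_tsum hterm hTsum hgeo
      _ = x ^ (N+1) / (Nat.factorial N : ℝ) * 2 := by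
          rw [tsum_mul_left, tsum_geometric_two]
      _ = 2 * x ^ (N+1) / (Nat.factorial N : ℝ) := by ring
  -- put together
  rw [← key, hhead]
  set H : ℝ := (a N - b N) / (Nat.factorial N : ℝ) * x ^ N with hHdef
  have h1 : |H| ≤ |H + T| + |T| := by
    calc |H| = |(H + T) + (-T)| := by ring_nf
      _ ≤ |H + T| + |(-T)| := abs_add_le _ _
      _ = |H + T| + |T| := by rw [abs_neg]
  have h2 : 2 * x ^ (N+1) / (Nat.factorial N : ℝ) ≤ x ^ N / 2 / (Nat.factorial N : ℝ) := by
    gcongr ?_ / _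
    nlinarith [pow_nonneg hx0 N, pow_succ x N]
  have h3 : x ^ N / (2 * (Nat.factorial N : ℝ)) = x ^ N / (Nat.factorial N : ℝ) - x ^ N / 2 / (Nat.factorial N : ℝ) := by
    field_simp
    ring
  rw [habshead] at h1
  rw [h3]
  linarith

lemma contOn {γ : ℝ} (hγ : 0 < γ) {c : ℕ → ℝ} (hc : ∀ n, |c n| ≤ 1) :
    ContinuousOn (fun x : ℝ => ∑' n : ℕ, c n / (Nat.factorial n : ℝ) * x ^ n) (Icc 0 γ) := by
  apply continuousOn_tsum (u := fun n => γ ^ n / (Nat.factorial n : ℝ))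
    (fun i => ((continuous_const.mul (continuous_pow i)).continuousOn))
    (Real.summable_pow_div_factorial γ)
  intro n x hx
  have h0 : (0:ℝ) < (Nat.factorial n : ℝ) := by positivity
  have hxg : |x| ≤ γ := by rw [abs_of_nonneg hx.1]; exact hx.2
  show ‖c n / (Nat.factorial n : ℝ) * x ^ n‖ ≤ _
  rw [norm_mul, norm_div, norm_pow, Real.norm_eq_abs, Real.norm_eq_abs, Real.norm_eq_abs,
    abs_of_pos h0]
  calc |c n| / (Nat.factorial n : ℝ) * |x| ^ n ≤ 1 / (Nat.factorial n : ℝ) * γ ^ n := by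
        gcongr
        exact hc n
    _ = γ ^ n / (Nat.factorial n : ℝ) := by ring

lemma aemeas {γ : ℝ} (hγ : 0 < γ) {a b : ℕ → ℝ} (ha : ∀ n, a n = 0 ∨ a n = 1)
    (hb : ∀ n, b n = 0 ∨ b n = 1) :
    AEStronglyMeasurable (fun x => fseq a x - fseq b x) (volume.restrict (Icc 0 γ)) := by
  have : (fun x => fseq a x - fseq b x)
      = fun x : ℝ => ∑' n : ℕ, (a n - b n) / (Nat.factorial n : ℝ) * x ^ n := by
    funext x; exact fseq_sub ha hb x
  rw [this]
  exact (contOn hγ (binary_sub_abs ha hb)).aestronglyMeasurable measurableSet_Icc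

lemma eLp_le {γ : ℝ} (hγ : 0 < γ) (q : ℝ≥0∞) {f : ℝ → ℝ} {C : ℝ}
    (hC : ∀ x ∈ Icc (0:ℝ) γ, ‖f x‖ ≤ C) :
    eLpNorm f q (volume.restrict (Icc 0 γ))
      ≤ (ENNReal.ofReal γ) ^ q.toReal⁻¹ * ENNReal.ofReal C := by
  have hae : ∀ᵐ x ∂(volume.restrict (Icc (0:ℝ) γ)), ‖f x‖ ≤ C :=
    (ae_restrict_mem measurableSet_Icc).mono hC
  have := eLpNorm_le_of_ae_bound (p := q) hae
  simpa [Measure.restrict_apply_univ, Real.volume_Icc, sub_zero] using this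

lemma eLp_ne_top {γ : ℝ} (hγ : 0 < γ) (q : ℝ≥0∞) {a b : ℕ → ℝ}
    (ha : ∀ n, a n = 0 ∨ a n = 1) (hb : ∀ n, b n = 0 ∨ b n = 1) :
    eLpNorm (fun x => fseq a x - fseq b x) q (volume.restrict (Icc 0 γ)) ≠ ⊤ := by
  have hC : ∀ x ∈ Icc (0:ℝ) γ, ‖fseq a x - fseq b x‖
      ≤ ∑' n : ℕ, γ ^ (n + 0) / (Nat.factorial (n + 0) : ℝ) := by
    intro x hx
    rw [Real.norm_eq_abs]
    exact sup_bound hγ ha hb (fun n hn => absurd hn (Nat.not_lt_zero n)) hx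
  refine ne_top_of_le_ne_top ?_ (eLp_le hγ q hC)
  exact ENNReal.mul_ne_top (ENNReal.rpow_ne_top_of_nonneg (by positivity) ENNReal.ofReal_ne_top)
    ENNReal.ofReal_ne_top

lemma exponent_nonneg {p : ℝ≥0∞} (hp : 1 ≤ p) : 0 ≤ 1 - 1 / p.toReal := by
  rcases eq_or_ne p ⊤ with h | h
  · simp [h]
  · have h1 : 1 ≤ p.toReal := by
      rw [← ENNReal.toReal_one]
      exact ENNReal.toReal_mono h hp
    have : 1 / p.toReal ≤ 1 := by
      rw [div_le_one (by linarith)]; linarith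
    linarith

lemma rho_one_le {γ : ℝ} (hγ : 0 < γ) {p : ℝ≥0∞} (hp : 1 ≤ p) {a b : ℕ → ℝ}
    (ha : ∀ n, a n = 0 ∨ a n = 1) (hb : ∀ n, b n = 0 ∨ b n = 1) :
    rho 0 γ 1 (fseq a) (fseq b)
      ≤ ((ENNReal.ofReal γ) ^ (1 - 1/p.toReal)).toReal * rho 0 γ p (fseq a) (fseq b) := by
  have hmeas := aemeas hγ ha hb
  have step := eLpNorm_le_eLpNorm_mul_rpow_measure_univ (p := 1) (q := p) hp hmeas
  rw [Measure.restrict_apply_univ, Real.volume_Icc, sub_zero, ENNReal.toReal_one] at step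
  have hrne : (ENNReal.ofReal γ) ^ (1 - 1/p.toReal) ≠ ⊤ :=
    ENNReal.rpow_ne_top_of_nonneg (exponent_nonneg hp) ENNReal.ofReal_ne_top
  have hne : eLpNorm (fun x => fseq a x - fseq b x) p (volume.restrict (Icc 0 γ))
      * (ENNReal.ofReal γ) ^ (1 - 1/p.toReal) ≠ ⊤ :=
    ENNReal.mul_ne_top (eLp_ne_top hγ p ha hb) hrne
  have := ENNReal.toReal_mono hne (by simpa using step)
  rw [ENNReal.toReal_mul] at this
  rw [rho, rho]
  linarith [this]

lemma rho_one_lower {γ : ℝ} (hγ : 0 < γ) {a b : ℕ → ℝ}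
    (ha : ∀ n, a n = 0 ∨ a n = 1) (hb : ∀ n, b n = 0 ∨ b n = 1) {N : ℕ}
    (hab : ∀ n < N, a n = b n) (hne : a N ≠ b N) :
    (min γ 4⁻¹ / 2) ^ N / (2 * (Nat.factorial N : ℝ)) * (min γ 4⁻¹ / 2)
      ≤ rho 0 γ 1 (fseq a) (fseq b) := by
  set η : ℝ := min γ 4⁻¹ with hη
  have hη0 : 0 < η := lt_min hγ (by norm_num)
  have hηγ : η ≤ γ := min_le_left _ _
  have hη4 : η ≤ 4⁻¹ := min_le_right _ _
  set c : ℝ := (η/2) ^ N / (2 * (Nat.factorial N : ℝ)) with hc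
  have hc0 : 0 ≤ c := by positivity
  have hpt : ∀ x ∈ Icc (η/2) η,
      (ENNReal.ofReal c : ℝ≥0∞) ≤ (‖fseq a x - fseq b x‖₊ : ℝ≥0∞) := by
    intro x hx
    have hx0 : (0:ℝ) ≤ x := le_trans (by positivity) hx.1
    have hx4 : x ≤ 4⁻¹ := le_trans hx.2 hη4
    have h1 : (η/2) ^ N ≤ x ^ N := pow_le_pow_left₀ (by positivity) hx.1 N
    have h2 : c ≤ x ^ N / (2 * (Nat.factorial N : ℝ)) := by
      rw [hc]; gcongr
    have h3 := lower_bound ha hb hab hne hx0 hx4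
    rw [← ENNReal.ofReal_coe_nnreal, coe_nnnorm]
    apply ENNReal.ofReal_le_ofReal
    rw [Real.norm_eq_abs]
    linarith
  have hsub : Icc (η/2) η ⊆ Icc (0:ℝ) γ := Icc_subset_Icc (by positivity) hηγ
  have step1 : (ENNReal.ofReal c) * ENNReal.ofReal (η/2)
      ≤ eLpNorm (fun x => fseq a x - fseq b x) 1 (volume.restrict (Icc 0 γ)) := by
    rw [eLpNorm_one_eq_lintegral_enorm]
    calc (ENNReal.ofReal c) * ENNReal.ofReal (η/2)
        = ∫⁻ _ in Icc (η/2) η, (ENNReal.ofReal c) ∂volume := by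
          rw [setLIntegral_const, Real.volume_Icc, show η - η/2 = η/2 by ring]
      _ ≤ ∫⁻ x in Icc (η/2) η, (‖fseq a x - fseq b x‖₊ : ℝ≥0∞) ∂volume := by
          apply lintegral_mono_ae
          exact (ae_restrict_mem measurableSet_Icc).mono hpt
      _ ≤ ∫⁻ x in Icc 0 γ, (‖fseq a x - fseq b x‖₊ : ℝ≥0∞) ∂volume :=
          lintegral_mono' (Measure.restrict_mono hsub le_rfl) le_rfl
  have := ENNReal.toReal_mono (eLp_ne_top hγ 1 ha hb) step1
  rw [← ENNReal.ofReal_mul hc0, ENNReal.toReal_ofReal (by positivity)] at this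
  rw [rho]
  exact this

lemma exists_pos_le (N : ℕ) (L : ℕ → ℝ) (hL : ∀ n, 0 < L n) :
    ∃ δ > (0:ℝ), ∀ n < N, δ ≤ L n := by
  induction N with
  | zero => exact ⟨1, one_pos, fun n h => absurd h (Nat.not_lt_zero n)⟩
  | succ N ih =>
      obtain ⟨δ, hδ, hle⟩ := ih
      refine ⟨min δ (L N), lt_min hδ (hL N), fun n hn => ?_⟩
      rcases Nat.lt_succ_iff_lt_or_eq.mp hn with h | h
      · exact le_trans (min_le_left _ _) (hle n h)
      · subst h; exact min_le_right _ _

lemma master1 (γ : ℝ) (hγ : 0 < γ) (p : ℝ≥0∞) (hp : 1 ≤ p) :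
    ∀ a : ℕ → ℝ, IsBinary a → ∀ ε > (0 : ℝ), ∃ δ > (0 : ℝ),
      ∀ b : ℕ → ℝ, IsBinary b →
        rho 0 γ p (fseq a) (fseq b) < δ → dE a b < ε := by
  intro a ha ε hε
  obtain ⟨N, hN⟩ : ∃ N : ℕ, ∑' n : ℕ, (1:ℝ) / (Nat.factorial (n + N + 1) : ℝ) < ε :=
    (tail_tendsto_zero.eventually (gt_mem_nhds hε)).exists
  set K := ((ENNReal.ofReal γ) ^ (1 - 1/p.toReal)).toReal with hK
  have hK0 : 0 ≤ K := ENNReal.toReal_nonneg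
  set η : ℝ := min γ 4⁻¹ with hη
  have hη0 : 0 < η := lt_min hγ (by norm_num)
  have hη2 : 0 < η / 2 := by linarith
  obtain ⟨δ₀, hδ₀, hδle⟩ := exists_pos_le N
    (fun n => (η/2) ^ n / (2 * (Nat.factorial n : ℝ)) * (η/2))
    (fun n => mul_pos (div_pos (pow_pos hη2 n) (by positivity)) hη2)
  refine ⟨δ₀ / (K + 1), by positivity, ?_⟩
  intro b hb hrho
  have hagree : ∀ n < N, a n = b n := by
    by_contra hcon
    push_neg at hcon
    obtain ⟨m, hmN, hmne⟩ := hcon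
    have hex : ∃ k, a k ≠ b k := ⟨m, hmne⟩
    have hn₀ : a (Nat.find hex) ≠ b (Nat.find hex) := Nat.find_spec hex
    have hlt : ∀ k < Nat.find hex, a k = b k := fun k hk => not_not.mp (Nat.find_min hex hk)
    have hn₀N : Nat.find hex < N := lt_of_le_of_lt (Nat.find_min' hex hmne) hmN
    have hlow := rho_one_lower hγ ha hb hlt hn₀
    have hup := rho_one_le hγ hp ha hb
    have h1 : δ₀ ≤ rho 0 γ 1 (fseq a) (fseq b) := le_trans (hδle _ hn₀N) hlow
    have h2 : δ₀ ≤ K * rho 0 γ p (fseq a) (fseq b) := le_trans h1 hup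
    have h3 : rho 0 γ p (fseq a) (fseq b) * (K + 1) < δ₀ :=
      (lt_div_iff₀ (by positivity)).mp hrho
    have h4 : 0 ≤ rho 0 γ p (fseq a) (fseq b) := ENNReal.toReal_nonneg
    nlinarith
  calc dE a b ≤ ∑' n : ℕ, (1:ℝ) / (Nat.factorial (n + N + 1) : ℝ) := dE_le_tail ha hb hagree
    _ < ε := hN

lemma master2 (γ : ℝ) (hγ : 0 < γ) (q : ℝ≥0∞) :
    ∀ a : ℕ → ℝ, IsBinary a → ∀ ε > (0 : ℝ), ∃ δ > (0 : ℝ),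
      ∀ b : ℕ → ℝ, IsBinary b →
        dE a b < δ → rho 0 γ q (fseq a) (fseq b) < ε := by
  intro a ha ε hε
  set K := ((ENNReal.ofReal γ) ^ q.toReal⁻¹).toReal with hKdef
  have hK0 : 0 ≤ K := ENNReal.toReal_nonneg
  have htend : Tendsto
      (fun N : ℕ => K * ∑' n : ℕ, γ ^ (n + N) / (Nat.factorial (n + N) : ℝ)) atTop (𝓝 0) := by
    simpa using (gamma_tail_tendsto_zero γ).const_mul K
  obtain ⟨N, hN⟩ : ∃ N : ℕ,
      K * ∑' n : ℕ, γ ^ (n + N) / (Nat.factorial (n + N) : ℝ) < ε :=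
    (htend.eventually (gt_mem_nhds hε)).exists
  refine ⟨1 / (Nat.factorial N : ℝ), by positivity, ?_⟩
  intro b hb hdE
  have hagree : ∀ n < N, a n = b n := by
    intro n hn
    by_contra hne
    have h1 := one_div_fact_le_dE ha hb hne
    have hfle : (Nat.factorial (n+1) : ℝ) ≤ (Nat.factorial N : ℝ) := by
      exact_mod_cast Nat.factorial_le (by omega)
    have h2 : (1:ℝ) / (Nat.factorial N : ℝ) ≤ 1 / (Nat.factorial (n+1) : ℝ) := by
      gcongr
    linarith
  have hC : ∀ x ∈ Icc (0:ℝ) γ, ‖fseq a x - fseq b x‖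
      ≤ ∑' n : ℕ, γ ^ (n + N) / (Nat.factorial (n + N) : ℝ) := by
    intro x hx
    rw [Real.norm_eq_abs]
    exact sup_bound hγ ha hb hagree hx
  have hS0 : 0 ≤ ∑' n : ℕ, γ ^ (n + N) / (Nat.factorial (n + N) : ℝ) :=
    tsum_nonneg (fun n => by positivity)
  have step := eLp_le hγ q hC
  have hne2 : (ENNReal.ofReal γ) ^ q.toReal⁻¹
      * ENNReal.ofReal (∑' n : ℕ, γ ^ (n + N) / (Nat.factorial (n + N) : ℝ)) ≠ ⊤ :=
    ENNReal.mul_ne_top (ENNReal.rpow_ne_top_of_nonneg (by positivity) ENNReal.ofReal_ne_top)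
      ENNReal.ofReal_ne_top
  have h3 := ENNReal.toReal_mono hne2 step
  rw [ENNReal.toReal_mul, ENNReal.toReal_ofReal hS0] at h3
  rw [rho]
  calc (eLpNorm (fun x => fseq a x - fseq b x) q (volume.restrict (Icc 0 γ))).toReal
      ≤ K * ∑' n : ℕ, γ ^ (n + N) / (Nat.factorial (n + N) : ℝ) := h3
    _ < ε := hN


/-- Fix `γ > 0` and `1 ≤ p ≤ ∞`. On `E` the topology induced by
`ρ_p` coincides with the topology induced by `d_E` (the identity map is continuous in
both directions, in ε-δ form); in particular, for any `1 ≤ q ≤ ∞` the metrics `ρ_p`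
and `ρ_q` induce the same topology on `E`. -/
theorem stmt19 (γ : ℝ) (hγ : 0 < γ) (p : ℝ≥0∞) (hp : 1 ≤ p) :
    ((∀ a : ℕ → ℝ, IsBinary a → ∀ ε > (0 : ℝ), ∃ δ > (0 : ℝ),
      ∀ b : ℕ → ℝ, IsBinary b →
        rho 0 γ p (fseq a) (fseq b) < δ → dE a b < ε) ∧
    (∀ a : ℕ → ℝ, IsBinary a → ∀ ε > (0 : ℝ), ∃ δ > (0 : ℝ),
      ∀ b : ℕ → ℝ, IsBinary b →
        dE a b < δ → rho 0 γ p (fseq a) (fseq b) < ε)) ∧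
    (∀ q : ℝ≥0∞, 1 ≤ q →
      ∀ a : ℕ → ℝ, IsBinary a → ∀ ε > (0 : ℝ), ∃ δ > (0 : ℝ),
        ∀ b : ℕ → ℝ, IsBinary b →
          rho 0 γ p (fseq a) (fseq b) < δ → rho 0 γ q (fseq a) (fseq b) < ε) := by
  refine ⟨⟨master1 γ hγ p hp, master2 γ hγ p⟩, ?_⟩
  intro q _ a ha ε hε
  obtain ⟨δ₁, hδ₁, h₁⟩ := master2 γ hγ q a ha ε hε
  obtain ⟨δ, hδ, h⟩ := master1 γ hγ p hp a ha δ₁ hδ₁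
  exact ⟨δ, hδ, fun b hb hr => h₁ b hb (h b hb hr)⟩
end
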